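/- arXiv:1011.4698 — 3 statements merged into one kernel-verified Lean document; each statement's English description precedes it below -/
import Mathlib

section
/- J : (J : I) = I; J : (J : I²) = (x², xy, y², z₁, …, z_r); for every ℓ with 3 ≤ ℓ ≤ n one has J : (J : I^ℓ) = (x^ℓ, xy, y³, z₁, …, z_r); and J : (J : I^{n+1}) = J. -/
open MvPowerSeries Finsupp

namespace Cusp14

variable {σ k : Type} [CommRing k]

/-- If all coefficients of `f` outside the "cone" above `a` vanish, then `f` is a multiple
of the monomial `X^a`. -/
theorem mem_span_monomial {a : σ →₀ ℕ} {f : MvPowerSeries σ k}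
    (h : ∀ m : σ →₀ ℕ, ¬ a ≤ m → MvPowerSeries.coeff (R := k) m f = 0) :
    f ∈ Ideal.span {(MvPowerSeries.monomial (R := k) a 1 : MvPowerSeries σ k)} := by
  rw [Ideal.mem_span_singleton]
  refine ⟨fun m => f (m + a), MvPowerSeries.ext fun m => ?_⟩
  erw [MvPowerSeries.coeff_monomial_mul]
  split_ifs with hm
  · erw [one_mul, MvPowerSeries.coeff_apply, MvPowerSeries.coeff_apply,
      tsub_add_cancel_of_le hm]
  · exact h m hm

/-- Membership criterion in a span of monomials. -/
theorem mem_span_of_coeff {G : Set (MvPowerSeries σ k)} :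
    ∀ L : List (σ →₀ ℕ),
    (∀ a ∈ L, (MvPowerSeries.monomial (R := k) a 1 : MvPowerSeries σ k) ∈ Ideal.span G) →
    ∀ f : MvPowerSeries σ k,
      (∀ m, (∀ a ∈ L, ¬ a ≤ m) → MvPowerSeries.coeff (R := k) m f = 0) →
    f ∈ Ideal.span G
  | [], _, f, h => by
      have : f = 0 := MvPowerSeries.ext fun m => by simpa using h m (by simp)
      simp [this]
  | a :: L, hG, f, h => by
      classical
      set f₁ : MvPowerSeries σ k := (fun m => if a ≤ m then f m else 0) with hf₁
      have h1 : f₁ ∈ Ideal.span G := by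
        have hmem := mem_span_monomial (a := a) (f := f₁) (fun m hm => by
          show f₁ m = 0
          rw [hf₁]; exact if_neg hm)
        exact Ideal.span_le.mpr (Set.singleton_subset_iff.mpr (hG a (by simp))) hmem
      have h2 : f - f₁ ∈ Ideal.span G := by
        refine mem_span_of_coeff L (fun b hb => hG b (by simp [hb])) _ (fun m hm => ?_)
        have : MvPowerSeries.coeff (R := k) m (f - f₁) = f m - f₁ m := rfl
        rw [this, hf₁]
        by_cases ham : a ≤ m
        · simp [if_pos ham]
        · have h0 : MvPowerSeries.coeff (R := k) m f = 0 := h m (by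
            intro b hb
            rcases List.mem_cons.mp hb with rfl | hb
            · exact ham
            · exact hm b hb)
          simp [if_neg ham, MvPowerSeries.coeff_apply] at h0 ⊢
          simp [h0]
      simpa using Ideal.add_mem _ h1 h2

/-- Coefficients vanish on a span of monomials at exponents not above any generator. -/
theorem coeff_eq_zero_of_mem_span {G : Set (MvPowerSeries σ k)} {L : List (σ →₀ ℕ)}
    (hG : ∀ g ∈ G, ∃ a ∈ L, g = MvPowerSeries.monomial (R := k) a 1)
    {f : MvPowerSeries σ k} (hf : f ∈ Ideal.span G) {m : σ →₀ ℕ}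
    (hm : ∀ a ∈ L, ¬ a ≤ m) :
    MvPowerSeries.coeff (R := k) m f = 0 := by
  classical
  refine Submodule.span_induction
    (p := fun x _ => ∀ m, (∀ a ∈ L, ¬ a ≤ m) → MvPowerSeries.coeff (R := k) m x = 0)
    ?_ ?_ ?_ ?_ hf m hm
  · intro g hg m hm
    obtain ⟨a, haL, rfl⟩ := hG g hg
    rw [MvPowerSeries.coeff_monomial, if_neg]
    exact fun h => hm a haL (le_of_eq h.symm)
  · intro m _; simp
  · intro u v _ _ hu hv m hm
    simp [map_add, hu m hm, hv m hm]
  · intro c g _ hg m hm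
    rw [smul_eq_mul, MvPowerSeries.coeff_mul]
    refine Finset.sum_eq_zero fun p hp => ?_
    rw [Finset.HasAntidiagonal.mem_antidiagonal] at hp
    have h2 : p.2 ≤ m := hp ▸ le_add_self
    rw [hg p.2 (fun a ha hle => hm a ha (hle.trans h2)), mul_zero]

end Cusp14

namespace Cusp14

variable {σ k : Type} [CommRing k]

/-- Exponents divisible by one of the "easy" generators `x*y`, `z_u`. -/
def OKm (s t : σ) (m : σ →₀ ℕ) : Prop :=
  (∃ u, u ≠ s ∧ u ≠ t ∧ m u ≠ 0) ∨ (m s ≠ 0 ∧ m t ≠ 0)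

theorem OKm.mono {s t : σ} {a m : σ →₀ ℕ} (h : OKm s t a) (hle : a ≤ m) : OKm s t m := by
  rcases h with ⟨u, hus, hut, hu⟩ | ⟨h1, h2⟩
  · exact Or.inl ⟨u, hus, hut, fun h0 => hu (Nat.le_zero.mp (h0 ▸ hle u))⟩
  · exact Or.inr ⟨fun h0 => h1 (Nat.le_zero.mp (h0 ▸ hle s)),
      fun h0 => h2 (Nat.le_zero.mp (h0 ▸ hle t))⟩

theorem not_OKm_single {s t u : σ} (hst : s ≠ t) (hu : u = s ∨ u = t) (i : ℕ) :
    ¬ OKm s t (Finsupp.single u i) := by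
  classical
  rintro (⟨v, hvs, hvt, hv⟩ | ⟨h1, h2⟩)
  · rw [Finsupp.single_apply] at hv
    rcases hu with rfl | rfl
    · by_cases h : u = v <;> simp [h] at hv <;> exact hvs h.symm
    · by_cases h : u = v <;> simp [h] at hv <;> exact hvt h.symm
  · rw [Finsupp.single_apply] at h1 h2
    rcases hu with rfl | rfl
    · by_cases h : u = t <;> simp [h] at h2; exact hst h
    · by_cases h : u = s <;> simp [h] at h1; exact hst h.symm

theorem coeff_single_mul [DecidableEq σ] (c g : MvPowerSeries σ k) (u : σ) (i : ℕ) :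
    MvPowerSeries.coeff (R := k) (Finsupp.single u i) (c * g) =
      ∑ p ∈ Finset.HasAntidiagonal.antidiagonal i,
        MvPowerSeries.coeff (R := k) (Finsupp.single u p.1) c *
          MvPowerSeries.coeff (R := k) (Finsupp.single u p.2) g := by
  rw [MvPowerSeries.coeff_mul, Finsupp.antidiagonal_single, Finset.sum_map]
  rfl

end Cusp14

namespace Cusp14

variable {σ k : Type} [CommRing k]

/-- The coefficient conditions cutting out `J = (y^3 + x^n, xy, z)`. -/
def JP (s t : σ) (n : ℕ) (f : MvPowerSeries σ k) : Prop :=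
  (∀ i < n, MvPowerSeries.coeff (R := k) (Finsupp.single s i) f = 0) ∧
  (∀ j < 3, MvPowerSeries.coeff (R := k) (Finsupp.single t j) f = 0) ∧
  MvPowerSeries.coeff (R := k) (Finsupp.single s n) f = MvPowerSeries.coeff (R := k) (Finsupp.single t 3) f

theorem JP_of_mem {s t : σ} (hst : s ≠ t) {n : ℕ} (hn3 : 3 ≤ n)
    {G : Set (MvPowerSeries σ k)}
    (hG : ∀ g ∈ G,
      g = MvPowerSeries.monomial (R := k) (Finsupp.single t 3) 1 +
          MvPowerSeries.monomial (R := k) (Finsupp.single s n) 1 ∨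
      ∃ a, OKm s t a ∧ g = MvPowerSeries.monomial (R := k) a 1)
    {f : MvPowerSeries σ k} (hf : f ∈ Ideal.span G) : JP s t n f := by
  classical
  refine Submodule.span_induction (p := fun x _ => JP s t n x) ?_ ?_ ?_ ?_ hf
  · intro g hg
    rcases hG g hg with rfl | ⟨a, ha, rfl⟩
    · refine ⟨fun i hi => ?_, fun j hj => ?_, ?_⟩
      · rw [map_add, MvPowerSeries.coeff_monomial, MvPowerSeries.coeff_monomial,
          if_neg, if_neg, add_zero]
        · rw [Finsupp.single_eq_single_iff]; omega
        · rw [Finsupp.single_eq_single_iff]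
          rintro (⟨rfl, -⟩ | ⟨-, h3⟩); exacts [hst rfl, by omega]
      · rw [map_add, MvPowerSeries.coeff_monomial, MvPowerSeries.coeff_monomial,
          if_neg, if_neg, add_zero]
        · rw [Finsupp.single_eq_single_iff]
          rintro (⟨rfl, -⟩ | ⟨-, h3⟩); exacts [hst rfl, by omega]
        · rw [Finsupp.single_eq_single_iff]; omega
      · rw [map_add, map_add, MvPowerSeries.coeff_monomial, MvPowerSeries.coeff_monomial,
          MvPowerSeries.coeff_monomial, MvPowerSeries.coeff_monomial,
          if_neg, if_pos rfl, if_pos rfl, if_neg]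
        · ring
        · rw [Finsupp.single_eq_single_iff]
          rintro (⟨rfl, -⟩ | ⟨h3, -⟩); exacts [hst rfl, by omega]
        · rw [Finsupp.single_eq_single_iff]
          rintro (⟨rfl, -⟩ | ⟨-, h3⟩); exacts [hst rfl, by omega]
    · refine ⟨fun i _ => ?_, fun j _ => ?_, ?_⟩
      · rw [MvPowerSeries.coeff_monomial, if_neg]
        rintro rfl; exact not_OKm_single hst (Or.inl rfl) i ha
      · rw [MvPowerSeries.coeff_monomial, if_neg]
        rintro rfl; exact not_OKm_single hst (Or.inr rfl) j ha
      · rw [MvPowerSeries.coeff_monomial, MvPowerSeries.coeff_monomial, if_neg, if_neg]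
        · rintro rfl; exact not_OKm_single hst (Or.inr rfl) 3 ha
        · rintro rfl; exact not_OKm_single hst (Or.inl rfl) n ha
  · exact ⟨fun i _ => by simp, fun j _ => by simp, by simp⟩
  · rintro u v _ _ ⟨hu1, hu2, hu3⟩ ⟨hv1, hv2, hv3⟩
    exact ⟨fun i hi => by simp [map_add, hu1 i hi, hv1 i hi],
      fun j hj => by simp [map_add, hu2 j hj, hv2 j hj],
      by simp [map_add, hu3, hv3]⟩
  · rintro c g _ ⟨hg1, hg2, hg3⟩
    rw [smul_eq_mul]
    have key : ∀ (u : σ) (N : ℕ),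
        (∀ j < N, MvPowerSeries.coeff (R := k) (Finsupp.single u j) g = 0) →
        MvPowerSeries.coeff (R := k) (Finsupp.single u N) (c * g) =
          MvPowerSeries.coeff (R := k) 0 c * MvPowerSeries.coeff (R := k) (Finsupp.single u N) g := by
      intro u N hgu
      rw [coeff_single_mul]
      rw [Finset.sum_eq_single (0, N)]
      · simp
      · rintro ⟨p1, p2⟩ hmem hne
        rw [Finset.HasAntidiagonal.mem_antidiagonal] at hmem
        have : p2 < N := by
          rcases Nat.lt_or_ge p2 N with h | h; exact h
          exfalso; exact hne (by simp at hmem ⊢; omega)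
        rw [hgu p2 this, mul_zero]
      · intro hmem
        exact absurd (by simp) hmem
    refine ⟨fun i hi => ?_, fun j hj => ?_, ?_⟩
    · rw [coeff_single_mul]
      refine Finset.sum_eq_zero fun p hp => ?_
      rw [Finset.HasAntidiagonal.mem_antidiagonal] at hp
      rw [hg1 p.2 (by omega), mul_zero]
    · rw [coeff_single_mul]
      refine Finset.sum_eq_zero fun p hp => ?_
      rw [Finset.HasAntidiagonal.mem_antidiagonal] at hp
      rw [hg2 p.2 (by omega), mul_zero]
    · rw [key s n hg1, key t 3 hg2, hg3]

end Cusp14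


namespace Cusp14

variable {σ k : Type} [CommRing k]

theorem pure_decomp {s : σ} {m : σ →₀ ℕ} (h : ∀ u, u ≠ s → m u = 0) :
    m = Finsupp.single s (m s) := by
  classical
  ext u
  rcases eq_or_ne u s with rfl | hu
  · simp
  · rw [h u hu, Finsupp.single_apply, if_neg (Ne.symm hu)]

theorem mem_of_JP [Fintype σ] [DecidableEq σ] {s t : σ} (hst : s ≠ t) {n : ℕ} (hn3 : 3 ≤ n)
    {G : Set (MvPowerSeries σ k)}
    (hGb : MvPowerSeries.monomial (R := k) (Finsupp.single t 3) 1 +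
      MvPowerSeries.monomial (R := k) (Finsupp.single s n) 1 ∈ G)
    (hGxy : MvPowerSeries.monomial (R := k) (Finsupp.single s 1 + Finsupp.single t 1) 1 ∈ G)
    (hGz : ∀ u, u ≠ s → u ≠ t → MvPowerSeries.monomial (R := k) (Finsupp.single u 1) 1 ∈ G)
    (hx1 : MvPowerSeries.monomial (R := k) (Finsupp.single s (n+1)) 1 ∈ Ideal.span G)
    (hy4 : MvPowerSeries.monomial (R := k) (Finsupp.single t 4) 1 ∈ Ideal.span G)
    {f : MvPowerSeries σ k} (hf : JP s t n f) : f ∈ Ideal.span G := by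
  classical
  obtain ⟨hf1, hf2, hf3⟩ := hf
  set c : k := MvPowerSeries.coeff (R := k) (Finsupp.single t 3) f with hc
  set B : MvPowerSeries σ k := MvPowerSeries.monomial (R := k) (Finsupp.single t 3) 1 +
      MvPowerSeries.monomial (R := k) (Finsupp.single s n) 1 with hB
  set fM : MvPowerSeries σ k := (fun m => if OKm s t m then f m else 0) with hfM
  set fx : MvPowerSeries σ k :=
    (fun m => if (∀ u, u ≠ s → m u = 0) ∧ n + 1 ≤ m s then f m else 0) with hfx
  set fy : MvPowerSeries σ k :=
    (fun m => if (∀ u, u ≠ t → m u = 0) ∧ 4 ≤ m t then f m else 0) with hfy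
  have hMmem : fM ∈ Ideal.span G := by
    refine mem_span_of_coeff
      ((Finsupp.single s 1 + Finsupp.single t 1) ::
        ((Finset.univ.filter (fun u : σ => u ≠ s ∧ u ≠ t)).toList.map
          (fun u => Finsupp.single u 1))) ?_ fM ?_
    · intro a ha
      rcases List.mem_cons.mp ha with rfl | ha
      · exact Ideal.subset_span hGxy
      · obtain ⟨u, hu, rfl⟩ := List.mem_map.mp ha
        rw [Finset.mem_toList, Finset.mem_filter] at hu
        exact Ideal.subset_span (hGz u hu.2.1 hu.2.2)
    · intro m hm
      show (if OKm s t m then f m else 0) = 0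
      rw [if_neg]
      rintro (⟨u, hus, hut, hu⟩ | ⟨h1, h2⟩)
      · refine hm (Finsupp.single u 1) ?_ ?_
        · refine List.mem_cons_of_mem _ (List.mem_map.mpr ⟨u, ?_, rfl⟩)
          rw [Finset.mem_toList, Finset.mem_filter]
          exact ⟨Finset.mem_univ u, hus, hut⟩
        · rw [Finsupp.single_le_iff]; omega
      · refine hm _ (List.mem_cons_self) ?_
        intro u
        rw [Finsupp.add_apply, Finsupp.single_apply, Finsupp.single_apply]
        rcases eq_or_ne s u with rfl | h1u
        · rw [if_pos rfl, if_neg (Ne.symm hst), add_zero]; omega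
        · rw [if_neg h1u, zero_add]
          rcases eq_or_ne t u with rfl | h2u
          · rw [if_pos rfl]; omega
          · rw [if_neg h2u]; omega
  have hxmem : fx ∈ Ideal.span G := by
    have h1 : fx ∈ Ideal.span {(MvPowerSeries.monomial (R := k) (Finsupp.single s (n+1)) 1 :
        MvPowerSeries σ k)} := by
      refine mem_span_monomial fun m hm => ?_
      show (if (∀ u, u ≠ s → m u = 0) ∧ n + 1 ≤ m s then f m else 0) = 0
      rw [if_neg]
      rintro ⟨hp, hs⟩
      exact hm (by rw [Finsupp.single_le_iff]; exact hs)
    exact Ideal.span_le.mpr (Set.singleton_subset_iff.mpr hx1) h1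
  have hymem : fy ∈ Ideal.span G := by
    have h1 : fy ∈ Ideal.span {(MvPowerSeries.monomial (R := k) (Finsupp.single t 4) 1 :
        MvPowerSeries σ k)} := by
      refine mem_span_monomial fun m hm => ?_
      show (if (∀ u, u ≠ t → m u = 0) ∧ 4 ≤ m t then f m else 0) = 0
      rw [if_neg]
      rintro ⟨hp, hs⟩
      exact hm (by rw [Finsupp.single_le_iff]; exact hs)
    exact Ideal.span_le.mpr (Set.singleton_subset_iff.mpr hy4) h1
  have hrepr : f = MvPowerSeries.C (σ := σ) (R := k) c * B + fM + fx + fy := by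
    refine MvPowerSeries.ext fun m => ?_
    have hCB : MvPowerSeries.coeff (R := k) m (MvPowerSeries.C (σ := σ) (R := k) c * B) =
        c * ((if m = Finsupp.single t 3 then (1:k) else 0) +
          (if m = Finsupp.single s n then (1:k) else 0)) := by
      rw [hB, mul_add, map_add]
      rw [show (MvPowerSeries.C (σ := σ) (R := k) c) = MvPowerSeries.monomial (R := k) 0 c from rfl]
      rw [MvPowerSeries.coeff_monomial_mul, MvPowerSeries.coeff_monomial_mul,
        if_pos zero_le, if_pos zero_le, tsub_zero,
        MvPowerSeries.coeff_monomial, MvPowerSeries.coeff_monomial]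
      ring
    rw [map_add, map_add, map_add, hCB]
    have hfMm : MvPowerSeries.coeff (R := k) m fM = (if OKm s t m then f m else 0) := rfl
    have hfxm : MvPowerSeries.coeff (R := k) m fx =
      (if (∀ u, u ≠ s → m u = 0) ∧ n + 1 ≤ m s then f m else 0) := rfl
    have hfym : MvPowerSeries.coeff (R := k) m fy =
      (if (∀ u, u ≠ t → m u = 0) ∧ 4 ≤ m t then f m else 0) := rfl
    rw [hfMm, hfxm, hfym, MvPowerSeries.coeff_apply]
    by_cases hOK : OKm s t m
    · have hA : m ≠ Finsupp.single t 3 := fun h => not_OKm_single hst (Or.inr rfl) 3 (h ▸ hOK)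
      have hB' : m ≠ Finsupp.single s n := fun h => not_OKm_single hst (Or.inl rfl) n (h ▸ hOK)
      have hC : ¬ ((∀ u, u ≠ s → m u = 0) ∧ n + 1 ≤ m s) := by
        rintro ⟨hp, -⟩
        rcases hOK with ⟨u, hus, hut, hu⟩ | ⟨h1, h2⟩
        · exact hu (hp u hus)
        · exact h2 (hp t (Ne.symm hst))
      have hD : ¬ ((∀ u, u ≠ t → m u = 0) ∧ 4 ≤ m t) := by
        rintro ⟨hp, -⟩
        rcases hOK with ⟨u, hus, hut, hu⟩ | ⟨h1, h2⟩
        · exact hu (hp u hut)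
        · exact h1 (hp s hst)
      rw [if_pos hOK, if_neg hA, if_neg hB', if_neg hC, if_neg hD]
      ring
    · rw [if_neg hOK]
      have hsplit : (∀ u, u ≠ s → m u = 0) ∨ (∀ u, u ≠ t → m u = 0) := by
        rw [OKm, not_or] at hOK
        obtain ⟨hz, hxy⟩ := hOK
        push_neg at hz hxy
        rcases Nat.eq_zero_or_pos (m t) with ht0 | htpos
        · left; intro u hu
          rcases eq_or_ne u t with rfl | hut
          · exact ht0
          · exact hz u hu hut
        · right
          have hs0 : m s = 0 := by
            by_contra hs0
            have := hxy hs0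
            omega
          intro u hu
          rcases eq_or_ne u s with rfl | hus
          · exact hs0
          · exact hz u hus hu
      rcases hsplit with hp | hp
      · -- pure x case
        have hmeq : m = Finsupp.single s (m s) := pure_decomp hp
        have hmt : m t = 0 := hp t (Ne.symm hst)
        have hfm : f m = MvPowerSeries.coeff (R := k) (Finsupp.single s (m s)) f := by
          rw [← hmeq]; rfl
        have hA : m ≠ Finsupp.single t 3 := by
          intro h
          have : m t = 3 := by rw [h]; simp
          omega
        have hD : ¬ ((∀ u, u ≠ t → m u = 0) ∧ 4 ≤ m t) := by
          rintro ⟨-, h4⟩; omega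
        rw [if_neg hA, if_neg hD]
        rcases Nat.lt_or_ge (m s) n with hi | hi
        · have hB' : m ≠ Finsupp.single s n := by
            intro h
            have : m s = n := by rw [h]; simp
            omega
          have hC : ¬ ((∀ u, u ≠ s → m u = 0) ∧ n + 1 ≤ m s) := by
            rintro ⟨-, hcon⟩; omega
          rw [if_neg hB', if_neg hC, hfm, hf1 (m s) hi]
          ring
        · rcases Nat.eq_or_lt_of_le hi with hi2 | hi2
          · have hB' : m = Finsupp.single s n := by rw [hmeq, ← hi2]
            have hC : ¬ ((∀ u, u ≠ s → m u = 0) ∧ n + 1 ≤ m s) := by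
              rintro ⟨-, hcon⟩; omega
            rw [if_pos hB', if_neg hC, hfm, ← hi2, hf3, hc]
            ring
          · have hB' : m ≠ Finsupp.single s n := by
              intro h
              have : m s = n := by rw [h]; simp
              omega
            rw [if_neg hB', if_pos ⟨hp, by omega⟩, hfm]
            ring
      · -- pure y case
        have hmeq : m = Finsupp.single t (m t) := pure_decomp hp
        have hms : m s = 0 := hp s hst
        have hfm : f m = MvPowerSeries.coeff (R := k) (Finsupp.single t (m t)) f := by
          rw [← hmeq]; rfl
        have hB' : m ≠ Finsupp.single s n := by
          intro h
          have : m s = n := by rw [h]; simp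
          omega
        have hC : ¬ ((∀ u, u ≠ s → m u = 0) ∧ n + 1 ≤ m s) := by
          rintro ⟨-, h4⟩; omega
        rw [if_neg hB', if_neg hC]
        rcases Nat.lt_or_ge (m t) 3 with hj | hj
        · have hA : m ≠ Finsupp.single t 3 := by
            intro h
            have : m t = 3 := by rw [h]; simp
            omega
          have hD : ¬ ((∀ u, u ≠ t → m u = 0) ∧ 4 ≤ m t) := by
            rintro ⟨-, hcon⟩; omega
          rw [if_neg hA, if_neg hD, hfm, hf2 (m t) hj]
          ring
        · rcases Nat.eq_or_lt_of_le hj with hj2 | hj2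
          · have hA : m = Finsupp.single t 3 := by rw [hmeq, ← hj2]
            have hD : ¬ ((∀ u, u ≠ t → m u = 0) ∧ 4 ≤ m t) := by
              rintro ⟨-, hcon⟩; omega
            rw [if_pos hA, if_neg hD, hfm, ← hj2, hc]
            ring
          · have hA : m ≠ Finsupp.single t 3 := by
              intro h
              have : m t = 3 := by rw [h]; simp
              omega
            rw [if_neg hA, if_pos ⟨hp, by omega⟩, hfm]
            ring
  rw [hrepr]
  exact Ideal.add_mem _ (Ideal.add_mem _ (Ideal.add_mem _
    (Ideal.mul_mem_left _ _ (Ideal.subset_span hGb)) hMmem) hxmem) hymem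

end Cusp14

namespace Cusp14

variable {σ k : Type} [CommRing k]

theorem split_of_not_OKm {s t : σ} (hst : s ≠ t) {m : σ →₀ ℕ} (hOK : ¬ OKm s t m) :
    (∀ u, u ≠ s → m u = 0) ∨ (∀ u, u ≠ t → m u = 0) := by
  rw [OKm, not_or] at hOK
  obtain ⟨hz, hxy⟩ := hOK
  push_neg at hz hxy
  rcases Nat.eq_zero_or_pos (m t) with ht0 | htpos
  · left; intro u hu
    rcases eq_or_ne u t with rfl | hut
    · exact ht0
    · exact hz u hu hut
  · right
    have hs0 : m s = 0 := by
      by_contra hs0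
      have := hxy hs0
      omega
    intro u hu
    rcases eq_or_ne u s with rfl | hus
    · exact hs0
    · exact hz u hus hu

theorem not_OKm_of_not_div {s t : σ} (hst : s ≠ t) {m : σ →₀ ℕ}
    (hxy : ¬ (Finsupp.single s 1 + Finsupp.single t 1 ≤ m))
    (hz : ∀ u, u ≠ s → u ≠ t → ¬ (Finsupp.single u 1 ≤ m)) : ¬ OKm s t m := by
  classical
  rintro (⟨u, hus, hut, hu⟩ | ⟨h1, h2⟩)
  · exact hz u hus hut (by rw [Finsupp.single_le_iff]; omega)
  · refine hxy ?_
    intro u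
    rw [Finsupp.add_apply, Finsupp.single_apply, Finsupp.single_apply]
    split_ifs with e1 e2 e2
    · exact absurd (e1.trans e2.symm) hst
    · subst e1; omega
    · subst e2; omega
    · omega

theorem coeff_shift_single {u : σ} (i ℓ : ℕ) (f : MvPowerSeries σ k) :
    MvPowerSeries.coeff (R := k) (Finsupp.single u (i + ℓ))
      (f * MvPowerSeries.monomial (R := k) (Finsupp.single u ℓ) 1) =
    MvPowerSeries.coeff (R := k) (Finsupp.single u i) f := by
  rw [Finsupp.single_add, MvPowerSeries.coeff_add_mul_monomial, mul_one]

theorem coeff_other_single {u v : σ} (huv : v ≠ u) {j ℓ : ℕ} (hl : 1 ≤ ℓ)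
    (f : MvPowerSeries σ k) :
    MvPowerSeries.coeff (R := k) (Finsupp.single v j)
      (f * MvPowerSeries.monomial (R := k) (Finsupp.single u ℓ) 1) = 0 := by
  classical
  rw [MvPowerSeries.coeff_mul_monomial, if_neg]
  rw [Finsupp.single_le_iff, Finsupp.single_apply, if_neg huv]
  omega

/-- Probe with a power of `x`. -/
theorem probe_x {s t : σ} (hst : s ≠ t) {n a : ℕ} (ha : 1 ≤ a) {f : MvPowerSeries σ k}
    (h : JP s t n (f * MvPowerSeries.monomial (R := k) (Finsupp.single s a) 1)) :
    ∀ i, i + a ≤ n → MvPowerSeries.coeff (R := k) (Finsupp.single s i) f = 0 := by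
  intro i hi
  rcases Nat.lt_or_ge (i + a) n with hlt | hge
  · rw [← coeff_shift_single i a f]
    exact h.1 _ hlt
  · have hin : i + a = n := by omega
    rw [← coeff_shift_single i a f, hin, h.2.2, coeff_other_single (Ne.symm hst) ha]

/-- Probe with a power of `y`. -/
theorem probe_y {s t : σ} (hst : s ≠ t) {n b : ℕ} (hb : 1 ≤ b) {f : MvPowerSeries σ k}
    (h : JP s t n (f * MvPowerSeries.monomial (R := k) (Finsupp.single t b) 1)) :
    ∀ j, j + b ≤ 3 → MvPowerSeries.coeff (R := k) (Finsupp.single t j) f = 0 := by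
  intro j hj
  rcases Nat.lt_or_ge (j + b) 3 with hlt | hge
  · rw [← coeff_shift_single j b f]
    exact h.2.1 _ hlt
  · have hjn : j + b = 3 := by omega
    rw [← coeff_shift_single j b f, hjn, ← h.2.2, coeff_other_single hst hb]

theorem mem_colon_span {R : Type} [CommRing R] {J : Ideal R} {G : Set R} {f : R}
    (h : ∀ g ∈ G, f * g ∈ J) : f ∈ Submodule.colon J (Ideal.span G) := by
  rw [Submodule.mem_colon]
  intro p hp
  refine Submodule.span_induction (p := fun x _ => f • x ∈ J) ?_ ?_ ?_ ?_ hp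
  · intro g hg; simpa [smul_eq_mul] using h g hg
  · simp
  · intro a b _ _ ha hb; rw [smul_add]; exact J.add_mem ha hb
  · intro c a _ ha; rw [smul_comm]; exact Submodule.smul_mem _ c ha

theorem mul_mem_of_mem_colon {R : Type} [CommRing R] {J P : Ideal R} {f g : R}
    (h : f ∈ Submodule.colon J P) (hg : g ∈ P) : f * g ∈ J := by
  simpa [smul_eq_mul] using Submodule.mem_colon.mp h g hg

theorem mem_colon_of_mem {R : Type} [CommRing R] {J : Ideal R} {f : R} (hf : f ∈ J)
    (P : Ideal R) : f ∈ Submodule.colon J P := by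
  rw [Submodule.mem_colon]
  intro p _
  rw [smul_eq_mul]
  exact Ideal.mul_mem_right p J hf

theorem colon_top {R : Type} [CommRing R] (J : Ideal R) :
    Submodule.colon J (⊤ : Ideal R) = J := by
  refine le_antisymm (fun f hf => ?_) (fun f hf => mem_colon_of_mem hf ⊤)
  have := mul_mem_of_mem_colon hf (Submodule.mem_top : (1:R) ∈ ⊤)
  simpa using this

end Cusp14

open MvPowerSeries Finsupp Cusp14 in
set_option maxHeartbeats 4000000 in
/-- Double-colon filtration of the local model of a `C_{3,n}` cuspidal structure:
`J : (J : I) = I`, `J : (J : I²) = (x², xy, y², z)`,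
`J : (J : I^ℓ) = (x^ℓ, xy, y³, z)` for `3 ≤ ℓ ≤ n`, and `J : (J : I^{n+1}) = J`. -/
theorem stmt_14 (k : Type) [Field k] (n r : ℕ) (hn : 4 ≤ n)
    (x y : MvPowerSeries (Fin (r + 2)) k) (z : Fin r → MvPowerSeries (Fin (r + 2)) k)
    (hx : x = MvPowerSeries.X 0) (hy : y = MvPowerSeries.X 1)
    (hz : ∀ i : Fin r, z i = MvPowerSeries.X i.succ.succ)
    (I J : Ideal (MvPowerSeries (Fin (r + 2)) k))
    (hI : I = Ideal.span ({x, y} ∪ Set.range z))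
    (hJ : J = Ideal.span ({y ^ 3 + x ^ n, x * y} ∪ Set.range z)) :
    Submodule.colon J (Submodule.colon J ((I ^ 1 : Ideal _))) = I ∧
    Submodule.colon J (Submodule.colon J ((I ^ 2 : Ideal _))) =
      Ideal.span ({x ^ 2, x * y, y ^ 2} ∪ Set.range z) ∧
    (∀ ℓ : ℕ, 3 ≤ ℓ → ℓ ≤ n →
      Submodule.colon J (Submodule.colon J ((I ^ ℓ : Ideal _))) =
        Ideal.span ({x ^ ℓ, x * y, y ^ 3} ∪ Set.range z)) ∧
    Submodule.colon J (Submodule.colon J ((I ^ (n + 1) : Ideal _))) = J := by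
  classical
  subst hx hy
  have hzf : z = fun i : Fin r => MvPowerSeries.X (i.succ.succ) := funext hz
  subst hzf
  set R := MvPowerSeries (Fin (r + 2)) k with hR
  have hst : (0 : Fin (r + 2)) ≠ 1 := by simp [Fin.ext_iff]
  have hn3 : 3 ≤ n := by omega
  have hu2 : ∀ i : Fin r, ((i.succ.succ : Fin (r + 2)) ≠ 0) ∧ ((i.succ.succ : Fin (r + 2)) ≠ 1) := by
    intro i
    constructor <;> · simp [Fin.ext_iff]
  have hclassu : ∀ u : Fin (r + 2), u ≠ 0 → u ≠ 1 → ∃ i : Fin r, u = i.succ.succ := by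
    intro u h0 h1
    have h0' : u.val ≠ 0 := by
      intro h; apply h0; apply Fin.ext; simp [h]
    have h1' : u.val ≠ 1 := by
      intro h; apply h1; apply Fin.ext; simp [h]
    have h2 : 2 ≤ u.val := by omega
    refine ⟨⟨u.val - 2, by omega⟩, ?_⟩
    simp [Fin.ext_iff]
    omega
  -- basic memberships in J
  have hxyJ : (X 0 : R) * X 1 ∈ J := by
    rw [hJ]; exact Ideal.subset_span (by simp)
  have hbinJ : (X 1 : R) ^ 3 + (X 0 : R) ^ n ∈ J := by
    rw [hJ]; exact Ideal.subset_span (by simp)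
  have hzJ : ∀ i : Fin r, (X (i.succ.succ) : R) ∈ J := by
    intro i; rw [hJ]; exact Ideal.subset_span (Set.mem_union_right _ ⟨i, rfl⟩)
  have hxn1J : (X 0 : R) ^ (n + 1) ∈ J := by
    have hid : (X 0 : R) ^ (n + 1) =
        X 0 * ((X 1) ^ 3 + (X 0) ^ n) - (X 1) ^ 2 * (X 0 * X 1) := by ring
    rw [hid]
    exact J.sub_mem (J.mul_mem_left _ hbinJ) (J.mul_mem_left _ hxyJ)
  have hy4J : (X 1 : R) ^ 4 ∈ J := by
    obtain ⟨p, hp⟩ : ∃ p, n = p + 1 := ⟨n - 1, by omega⟩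
    have hid : (X 1 : R) ^ 4 =
        X 1 * ((X 1) ^ 3 + (X 0) ^ n) - (X 0) ^ p * (X 0 * X 1) := by rw [hp]; ring
    rw [hid]
    exact J.sub_mem (J.mul_mem_left _ hbinJ) (J.mul_mem_left _ hxyJ)
  -- membership in J iff coefficient conditions
  have hJiff : ∀ f : R, f ∈ J ↔ JP (0 : Fin (r + 2)) 1 n f := by
    intro f
    constructor
    · intro hf
      refine JP_of_mem hst hn3 ?_ (hJ ▸ hf)
      intro g hg
      simp only [Set.mem_union, Set.mem_insert_iff, Set.mem_singleton_iff, Set.mem_range] at hg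
      rcases hg with (rfl | rfl) | ⟨i, rfl⟩
      · left; rw [X_pow_eq, X_pow_eq]
      · right
        refine ⟨Finsupp.single 0 1 + Finsupp.single 1 1, Or.inr ⟨?_, ?_⟩, ?_⟩
        · simp [Finsupp.single_apply, hst, Ne.symm hst]
        · simp [Finsupp.single_apply, hst, Ne.symm hst]
        · rw [X_def, X_def, monomial_mul_monomial, one_mul]
      · right
        exact ⟨Finsupp.single (i.succ.succ) 1,
          Or.inl ⟨i.succ.succ, (hu2 i).1, (hu2 i).2, by simp⟩, rfl⟩
    · intro hf
      rw [hJ]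
      refine mem_of_JP hst hn3 ?_ ?_ ?_ ?_ ?_ hf
      · rw [← X_pow_eq, ← X_pow_eq]
        exact Set.mem_union_left _ (by simp)
      · rw [show (MvPowerSeries.monomial (R := k) (Finsupp.single (0 : Fin (r+2)) 1 +
          Finsupp.single 1 1) 1 : R) = X 0 * X 1 by
            rw [X_def, X_def, monomial_mul_monomial, one_mul]]
        exact Set.mem_union_left _ (by simp)
      · intro u h0 h1
        obtain ⟨i, rfl⟩ := hclassu u h0 h1
        exact Set.mem_union_right _ ⟨i, rfl⟩
      · rw [← X_pow_eq, ← hJ]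
        exact hxn1J
      · rw [← X_pow_eq, ← hJ]
        exact hy4J
  -- multiplication helpers
  have hImul : ∀ w : R, w * X 0 ∈ J → w * X 1 ∈ J → ∀ f ∈ I, w * f ∈ J := by
    intro w h0 h1 f hf
    rw [hI] at hf
    refine Submodule.span_induction (p := fun g _ => w * g ∈ J) ?_ ?_ ?_ ?_ hf
    · intro g hg
      simp only [Set.mem_union, Set.mem_insert_iff, Set.mem_singleton_iff, Set.mem_range] at hg
      rcases hg with (rfl | rfl) | ⟨i, rfl⟩
      · exact h0
      · exact h1
      · show w * _ ∈ J
        exact J.mul_mem_left w (hzJ i)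
    · show w * 0 ∈ J
      rw [mul_zero]; exact J.zero_mem
    · intro a b _ _ ha hb
      show w * (a + b) ∈ J
      rw [mul_add]; exact J.add_mem ha hb
    · intro c a _ ha
      show w * (c • a) ∈ J
      rw [smul_eq_mul, mul_left_comm]
      exact J.mul_mem_left c ha
  have hP2sq : ∀ g ∈ (I ^ 2 : Ideal R), (X 1 : R) ^ 2 * g ∈ J := by
    intro g hg
    rw [pow_two] at hg
    refine Submodule.mul_induction_on hg (fun a ha b hb => ?_)
      (fun a b ha hb => by rw [mul_add]; exact J.add_mem ha hb)
    rw [← mul_assoc]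
    refine hImul _ ?_ ?_ b hb
    · rw [show (X 1 : R) ^ 2 * a * X 0 = (a * X 1) * (X 0 * X 1) by ring]
      exact J.mul_mem_left _ hxyJ
    · rw [show (X 1 : R) ^ 2 * a * X 1 = (X 1) ^ 3 * a by ring]
      refine hImul _ ?_ ?_ a ha
      · rw [show (X 1 : R) ^ 3 * X 0 = (X 1) ^ 2 * (X 0 * X 1) by ring]
        exact J.mul_mem_left _ hxyJ
      · rw [show (X 1 : R) ^ 3 * X 1 = (X 1) ^ 4 by ring]
        exact hy4J
  have hP2_3 : ∀ f ∈ (I ^ 3 : Ideal R), (X 1 : R) * f ∈ J := by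
    intro f hf
    rw [pow_succ] at hf
    refine Submodule.mul_induction_on hf (fun g hg h hh => ?_)
      (fun a b ha hb => by rw [mul_add]; exact J.add_mem ha hb)
    rw [← mul_assoc]
    refine hImul _ ?_ ?_ h hh
    · rw [show (X 1 : R) * g * X 0 = g * (X 0 * X 1) by ring]
      exact J.mul_mem_left _ hxyJ
    · rw [show (X 1 : R) * g * X 1 = (X 1) ^ 2 * g by ring]
      exact hP2sq g hg
  have hP2 : ∀ q : ℕ, ∀ f ∈ (I ^ (3 + q) : Ideal R), (X 1 : R) * f ∈ J := by
    intro q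
    induction q with
    | zero => exact hP2_3
    | succ p ih =>
      intro f hf
      rw [show 3 + (p + 1) = (3 + p) + 1 from rfl, pow_succ] at hf
      refine Submodule.mul_induction_on hf (fun g hg h hh => ?_)
        (fun a b ha hb => by rw [mul_add]; exact J.add_mem ha hb)
      rw [← mul_assoc]
      exact J.mul_mem_right h (ih g hg)
  have hP1 : ∀ ℓ : ℕ, 1 ≤ ℓ → ∀ d : ℕ, ℓ + d = n + 1 →
      ∀ f ∈ (I ^ ℓ : Ideal R), (X 0 : R) ^ d * f ∈ J := by
    intro ℓ
    induction ℓ with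
    | zero => omega
    | succ p ih =>
      intro _ d hd f hf
      rcases Nat.eq_zero_or_pos p with rfl | hp
      · rw [pow_one] at hf
        refine hImul _ ?_ ?_ f hf
        · rw [show (X 0 : R) ^ d * X 0 = (X 0) ^ (d + 1) by ring,
            show d + 1 = n + 1 by omega]
          exact hxn1J
        · obtain ⟨e, he⟩ : ∃ e, d = e + 1 := ⟨d - 1, by omega⟩
          rw [he, show (X 0 : R) ^ (e + 1) * X 1 = (X 0) ^ e * (X 0 * X 1) by ring]
          exact J.mul_mem_left _ hxyJ
      · rw [pow_succ] at hf
        refine Submodule.mul_induction_on hf (fun g hg h hh => ?_)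
          (fun a b ha hb => by rw [mul_add]; exact J.add_mem ha hb)
        rw [← mul_assoc]
        refine hImul _ ?_ ?_ h hh
        · rw [show (X 0 : R) ^ d * g * X 0 = (X 0) ^ (d + 1) * g by ring]
          exact ih hp (d + 1) (by omega) g hg
        · rcases Nat.eq_zero_or_pos d with rfl | hd1
          · rw [show (X 0 : R) ^ 0 * g * X 1 = X 1 * g by ring]
            obtain ⟨q, hq⟩ : ∃ q, p = 3 + q := ⟨p - 3, by omega⟩
            rw [hq] at hg
            exact hP2 q g hg
          · obtain ⟨e, he⟩ : ∃ e, d = e + 1 := ⟨d - 1, by omega⟩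
            rw [he, show (X 0 : R) ^ (e + 1) * g * X 1 = ((X 0) ^ e * g) * (X 0 * X 1) by ring]
            exact J.mul_mem_left _ hxyJ
  have hcolP : ∀ (P : Ideal R) (w : R), (∀ f ∈ P, w * f ∈ J) → w ∈ Submodule.colon J P := by
    intro P w h
    rw [Submodule.mem_colon]
    intro p hp
    rw [smul_eq_mul]
    exact h p hp
  -- uniform membership criterion for the target monomial ideals
  have hmain_sub : ∀ (G : Set R) (a b : ℕ), 1 ≤ a → 1 ≤ b →
      (MvPowerSeries.monomial (R := k) (Finsupp.single (0 : Fin (r+2)) a) 1 : R) ∈ Ideal.span G →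
      (MvPowerSeries.monomial (R := k) (Finsupp.single (1 : Fin (r+2)) b) 1 : R) ∈ Ideal.span G →
      (MvPowerSeries.monomial (R := k)
        (Finsupp.single (0 : Fin (r+2)) 1 + Finsupp.single 1 1) 1 : R) ∈ Ideal.span G →
      (∀ i : Fin r, (X (i.succ.succ) : R) ∈ Ideal.span G) →
      ∀ f : R, (∀ i, i < a → MvPowerSeries.coeff (R := k) (Finsupp.single 0 i) f = 0) →
        (∀ j, j < b → MvPowerSeries.coeff (R := k) (Finsupp.single 1 j) f = 0) →
        f ∈ Ideal.span G := by
    intro G a b ha hb hGa hGb hGxy hGz f hfa hfb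
    refine mem_span_of_coeff
      (Finsupp.single (0 : Fin (r+2)) a :: Finsupp.single (1 : Fin (r+2)) b ::
        (Finsupp.single (0 : Fin (r+2)) 1 + Finsupp.single 1 1) ::
        ((List.finRange r).map fun i => Finsupp.single ((i.succ.succ : Fin (r+2))) 1))
      ?_ f ?_
    · intro c hc
      simp only [List.mem_cons, List.mem_map, List.mem_finRange, true_and] at hc
      rcases hc with rfl | rfl | rfl | ⟨i, rfl⟩
      · exact hGa
      · exact hGb
      · exact hGxy
      · exact hGz i
    · intro m hm
      have hxyD : ¬ (Finsupp.single (0 : Fin (r+2)) 1 + Finsupp.single 1 1 ≤ m) :=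
        hm _ (by simp)
      have hzD : ∀ u : Fin (r+2), u ≠ 0 → u ≠ 1 → ¬ (Finsupp.single u 1 ≤ m) := by
        intro u h0 h1
        obtain ⟨i, rfl⟩ := hclassu u h0 h1
        exact hm _ (by simp [List.mem_map, List.mem_finRange])
      have hsplit := split_of_not_OKm hst (not_OKm_of_not_div hst hxyD hzD)
      rcases hsplit with hp | hp
      · have hma : m 0 < a := by
          have := hm _ (List.mem_cons_self)
          rw [Finsupp.single_le_iff] at this
          omega
        rw [pure_decomp hp]
        exact hfa (m 0) hma
      · have hmb : m 1 < b := by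
          have := hm (Finsupp.single (1 : Fin (r+2)) b) (by simp)
          rw [Finsupp.single_le_iff] at this
          omega
        rw [pure_decomp hp]
        exact hfb (m 1) hmb
  have hXI : (X 0 : R) ∈ I := by rw [hI]; exact Ideal.subset_span (by simp)
  have hYI : (X 1 : R) ∈ I := by rw [hI]; exact Ideal.subset_span (by simp)
  have hexy : (MvPowerSeries.monomial (R := k)
      (Finsupp.single (0 : Fin (r+2)) 1 + Finsupp.single 1 1) 1 : R) = X 0 * X 1 := by
    rw [X_def, X_def, monomial_mul_monomial, one_mul]
  refine ⟨?_, ?_, ?_, ?_⟩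
  · -- ℓ = 1
    have hs1 : Submodule.colon J ((I ^ 1 : Ideal _)) = Ideal.span
        ({X 0 ^ n, X 1 ^ 3, X 0 * X 1} ∪
          Set.range fun i : Fin r => (X i.succ.succ : R)) := by
      apply le_antisymm
      · intro f hf
        have h0 : f * X 0 ∈ J := mul_mem_of_mem_colon hf (by rw [pow_one]; exact hXI)
        have h1 : f * X 1 ∈ J := mul_mem_of_mem_colon hf (by rw [pow_one]; exact hYI)
        rw [X_def] at h0 h1
        have j0 := (hJiff _).mp h0
        have j1 := (hJiff _).mp h1
        refine hmain_sub _ n 3 (by omega) (by omega) ?_ ?_ ?_ ?_ f ?_ ?_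
        · rw [← X_pow_eq]; exact Ideal.subset_span (by simp)
        · rw [← X_pow_eq]; exact Ideal.subset_span (by simp)
        · rw [hexy]; exact Ideal.subset_span (by simp)
        · intro i; exact Ideal.subset_span (Set.mem_union_right _ ⟨i, rfl⟩)
        · intro i hi; exact probe_x hst le_rfl j0 i (by omega)
        · intro j hj; exact probe_y hst le_rfl j1 j (by omega)
      · rw [Ideal.span_le]
        rintro g hg
        simp only [Set.mem_union, Set.mem_insert_iff, Set.mem_singleton_iff,
          Set.mem_range] at hg
        rcases hg with (rfl | rfl | rfl) | ⟨i, rfl⟩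
        · refine SetLike.mem_coe.mpr (hcolP _ _ ?_)
          intro f hf
          rw [pow_one] at hf
          refine hImul _ ?_ ?_ f hf
          · rw [← pow_succ]; exact hxn1J
          · obtain ⟨e, he⟩ : ∃ e, n = e + 1 := ⟨n - 1, by omega⟩
            rw [he, show (X 0 : R) ^ (e+1) * X 1 = X 0 ^ e * (X 0 * X 1) by ring]
            exact J.mul_mem_left _ hxyJ
        · refine SetLike.mem_coe.mpr (hcolP _ _ ?_)
          intro f hf
          rw [pow_one] at hf
          refine hImul _ ?_ ?_ f hf
          · rw [show (X 1 : R) ^ 3 * X 0 = X 1 ^ 2 * (X 0 * X 1) by ring]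
            exact J.mul_mem_left _ hxyJ
          · rw [← pow_succ]; exact hy4J
        · exact SetLike.mem_coe.mpr (mem_colon_of_mem hxyJ _)
        · exact SetLike.mem_coe.mpr (mem_colon_of_mem (hzJ i) _)
    rw [hs1]
    apply le_antisymm
    · intro f hf
      have h0 : f * X 0 ^ n ∈ J := mul_mem_of_mem_colon hf (Ideal.subset_span (by simp))
      have h1 : f * X 1 ^ 3 ∈ J := mul_mem_of_mem_colon hf (Ideal.subset_span (by simp))
      rw [X_pow_eq] at h0 h1
      have j0 := (hJiff _).mp h0
      have j1 := (hJiff _).mp h1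
      rw [hI]
      refine hmain_sub _ 1 1 le_rfl le_rfl ?_ ?_ ?_ ?_ f ?_ ?_
      · rw [← X_def]; exact Ideal.subset_span (by simp)
      · rw [← X_def]; exact Ideal.subset_span (by simp)
      · rw [hexy]
        exact Ideal.mul_mem_right _ _ (Ideal.subset_span (by simp))
      · intro i; exact Ideal.subset_span (Set.mem_union_right _ ⟨i, rfl⟩)
      · intro i hi
        have hi0 : i = 0 := by omega
        subst hi0
        exact probe_x hst (by omega) j0 0 (by omega)
      · intro j hj
        have hj0 : j = 0 := by omega
        subst hj0
        exact probe_y hst (by omega) j1 0 (by omega)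
    · rw [hI, Ideal.span_le]
      rintro g hg
      simp only [Set.mem_union, Set.mem_insert_iff, Set.mem_singleton_iff,
        Set.mem_range] at hg
      have hC : ∀ w : R,
          (w * (X 0 ^ n) ∈ J) → (w * (X 1 ^ 3) ∈ J) → (w * (X 0 * X 1) ∈ J) →
          w ∈ Submodule.colon J (Ideal.span ({X 0 ^ n, X 1 ^ 3, X 0 * X 1} ∪
            Set.range fun i : Fin r => (X i.succ.succ : R))) := by
        intro w ha hb hc
        refine mem_colon_span ?_
        intro g hg
        simp only [Set.mem_union, Set.mem_insert_iff, Set.mem_singleton_iff,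
          Set.mem_range] at hg
        rcases hg with (rfl | rfl | rfl) | ⟨i, rfl⟩
        · exact ha
        · exact hb
        · exact hc
        · exact J.mul_mem_left w (hzJ i)
      rcases hg with (rfl | rfl) | ⟨i, rfl⟩
      · refine SetLike.mem_coe.mpr (hC _ ?_ ?_ ?_)
        · rw [show (X 0 : R) * X 0 ^ n = X 0 ^ (n+1) by ring]; exact hxn1J
        · rw [show (X 0 : R) * X 1 ^ 3 = X 1 ^ 2 * (X 0 * X 1) by ring]
          exact J.mul_mem_left _ hxyJ
        · exact J.mul_mem_left _ hxyJ
      · refine SetLike.mem_coe.mpr (hC _ ?_ ?_ ?_)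
        · obtain ⟨e, he⟩ : ∃ e, n = e + 1 := ⟨n - 1, by omega⟩
          rw [he, show (X 1 : R) * X 0 ^ (e+1) = X 0 ^ e * (X 0 * X 1) by ring]
          exact J.mul_mem_left _ hxyJ
        · rw [show (X 1 : R) * X 1 ^ 3 = X 1 ^ 4 by ring]; exact hy4J
        · exact J.mul_mem_left _ hxyJ
      · exact SetLike.mem_coe.mpr (mem_colon_of_mem (hzJ i) _)
  · -- ℓ = 2
    have hs1 : Submodule.colon J ((I ^ 2 : Ideal _)) = Ideal.span
        ({X 0 ^ (n-1), X 1 ^ 2, X 0 * X 1} ∪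
          Set.range fun i : Fin r => (X i.succ.succ : R)) := by
      apply le_antisymm
      · intro f hf
        have h0 : f * X 0 ^ 2 ∈ J := mul_mem_of_mem_colon hf (Ideal.pow_mem_pow hXI 2)
        have h1 : f * X 1 ^ 2 ∈ J := mul_mem_of_mem_colon hf (Ideal.pow_mem_pow hYI 2)
        rw [X_pow_eq] at h0 h1
        have j0 := (hJiff _).mp h0
        have j1 := (hJiff _).mp h1
        refine hmain_sub _ (n-1) 2 (by omega) (by omega) ?_ ?_ ?_ ?_ f ?_ ?_
        · rw [← X_pow_eq]; exact Ideal.subset_span (by simp)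
        · rw [← X_pow_eq]; exact Ideal.subset_span (by simp)
        · rw [hexy]; exact Ideal.subset_span (by simp)
        · intro i; exact Ideal.subset_span (Set.mem_union_right _ ⟨i, rfl⟩)
        · intro i hi; exact probe_x hst (by omega) j0 i (by omega)
        · intro j hj; exact probe_y hst (by omega) j1 j (by omega)
      · rw [Ideal.span_le]
        rintro g hg
        simp only [Set.mem_union, Set.mem_insert_iff, Set.mem_singleton_iff,
          Set.mem_range] at hg
        rcases hg with (rfl | rfl | rfl) | ⟨i, rfl⟩
        · exact SetLike.mem_coe.mpr (hcolP _ _ (hP1 2 (by omega) (n-1) (by omega)))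
        · exact SetLike.mem_coe.mpr (hcolP _ _ hP2sq)
        · exact SetLike.mem_coe.mpr (mem_colon_of_mem hxyJ _)
        · exact SetLike.mem_coe.mpr (mem_colon_of_mem (hzJ i) _)
    rw [hs1]
    apply le_antisymm
    · intro f hf
      have h0 : f * X 0 ^ (n-1) ∈ J := mul_mem_of_mem_colon hf (Ideal.subset_span (by simp))
      have h1 : f * X 1 ^ 2 ∈ J := mul_mem_of_mem_colon hf (Ideal.subset_span (by simp))
      rw [X_pow_eq] at h0 h1
      have j0 := (hJiff _).mp h0
      have j1 := (hJiff _).mp h1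
      refine hmain_sub _ 2 2 (by omega) (by omega) ?_ ?_ ?_ ?_ f ?_ ?_
      · rw [← X_pow_eq]; exact Ideal.subset_span (by simp)
      · rw [← X_pow_eq]; exact Ideal.subset_span (by simp)
      · rw [hexy]; exact Ideal.subset_span (by simp)
      · intro i; exact Ideal.subset_span (Set.mem_union_right _ ⟨i, rfl⟩)
      · intro i hi; exact probe_x hst (by omega) j0 i (by omega)
      · intro j hj; exact probe_y hst (by omega) j1 j (by omega)
    · rw [Ideal.span_le]
      rintro g hg
      simp only [Set.mem_union, Set.mem_insert_iff, Set.mem_singleton_iff,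
        Set.mem_range] at hg
      have hC : ∀ w : R,
          (w * (X 0 ^ (n-1)) ∈ J) → (w * (X 1 ^ 2) ∈ J) → (w * (X 0 * X 1) ∈ J) →
          w ∈ Submodule.colon J (Ideal.span ({X 0 ^ (n-1), X 1 ^ 2, X 0 * X 1} ∪
            Set.range fun i : Fin r => (X i.succ.succ : R))) := by
        intro w ha hb hc
        refine mem_colon_span ?_
        intro g hg
        simp only [Set.mem_union, Set.mem_insert_iff, Set.mem_singleton_iff,
          Set.mem_range] at hg
        rcases hg with (rfl | rfl | rfl) | ⟨i, rfl⟩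
        · exact ha
        · exact hb
        · exact hc
        · exact J.mul_mem_left w (hzJ i)
      rcases hg with (rfl | rfl | rfl) | ⟨i, rfl⟩
      · refine SetLike.mem_coe.mpr (hC _ ?_ ?_ ?_)
        · rw [← pow_add, show 2 + (n-1) = n + 1 by omega]; exact hxn1J
        · rw [show (X 0 : R) ^ 2 * X 1 ^ 2 = (X 0 * X 1) * (X 0 * X 1) by ring]
          exact J.mul_mem_left _ hxyJ
        · exact J.mul_mem_left _ hxyJ
      · exact SetLike.mem_coe.mpr (mem_colon_of_mem hxyJ _)
      · refine SetLike.mem_coe.mpr (hC _ ?_ ?_ ?_)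
        · obtain ⟨e, he⟩ : ∃ e, n - 1 = e + 1 := ⟨n - 2, by omega⟩
          rw [he, show (X 1 : R) ^ 2 * X 0 ^ (e+1) = (X 0 ^ e * X 1) * (X 0 * X 1) by ring]
          exact J.mul_mem_left _ hxyJ
        · rw [← pow_add]; exact hy4J
        · exact J.mul_mem_left _ hxyJ
      · exact SetLike.mem_coe.mpr (mem_colon_of_mem (hzJ i) _)
  · -- 3 ≤ ℓ ≤ n
    intro ℓ hl3 hln
    have hs1 : Submodule.colon J ((I ^ ℓ : Ideal _)) = Ideal.span
        ({X 0 ^ (n+1-ℓ), X 1} ∪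
          Set.range fun i : Fin r => (X i.succ.succ : R)) := by
      apply le_antisymm
      · intro f hf
        have h0 : f * X 0 ^ ℓ ∈ J := mul_mem_of_mem_colon hf (Ideal.pow_mem_pow hXI ℓ)
        rw [X_pow_eq] at h0
        have j0 := (hJiff _).mp h0
        refine hmain_sub _ (n+1-ℓ) 1 (by omega) (by omega) ?_ ?_ ?_ ?_ f ?_ ?_
        · rw [← X_pow_eq]; exact Ideal.subset_span (by simp)
        · rw [← X_pow_eq, pow_one]; exact Ideal.subset_span (by simp)
        · rw [hexy]
          exact Ideal.mul_mem_left _ _ (Ideal.subset_span (by simp))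
        · intro i; exact Ideal.subset_span (Set.mem_union_right _ ⟨i, rfl⟩)
        · intro i hi; exact probe_x hst (by omega) j0 i (by omega)
        · intro j hj
          have hj0 : j = 0 := by omega
          subst hj0
          rw [show (Finsupp.single (1 : Fin (r+2)) 0 : Fin (r+2) →₀ ℕ) =
            Finsupp.single (0 : Fin (r+2)) 0 by simp]
          exact probe_x hst (by omega) j0 0 (by omega)
      · rw [Ideal.span_le]
        rintro g hg
        simp only [Set.mem_union, Set.mem_insert_iff, Set.mem_singleton_iff,
          Set.mem_range] at hg
        rcases hg with (rfl | rfl) | ⟨i, rfl⟩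
        · exact SetLike.mem_coe.mpr (hcolP _ _ (hP1 ℓ (by omega) (n+1-ℓ) (by omega)))
        · refine SetLike.mem_coe.mpr (hcolP _ _ ?_)
          intro f hf
          obtain ⟨q, hq⟩ : ∃ q, ℓ = 3 + q := ⟨ℓ - 3, by omega⟩
          rw [hq] at hf
          exact hP2 q f hf
        · exact SetLike.mem_coe.mpr (mem_colon_of_mem (hzJ i) _)
    rw [hs1]
    apply le_antisymm
    · intro f hf
      have h0 : f * X 0 ^ (n+1-ℓ) ∈ J := mul_mem_of_mem_colon hf (Ideal.subset_span (by simp))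
      have h1 : f * X 1 ∈ J := mul_mem_of_mem_colon hf (Ideal.subset_span (by simp))
      rw [X_pow_eq] at h0
      rw [X_def] at h1
      have j0 := (hJiff _).mp h0
      have j1 := (hJiff _).mp h1
      refine hmain_sub _ ℓ 3 (by omega) (by omega) ?_ ?_ ?_ ?_ f ?_ ?_
      · rw [← X_pow_eq]; exact Ideal.subset_span (by simp)
      · rw [← X_pow_eq]; exact Ideal.subset_span (by simp)
      · rw [hexy]; exact Ideal.subset_span (by simp)
      · intro i; exact Ideal.subset_span (Set.mem_union_right _ ⟨i, rfl⟩)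
      · intro i hi; exact probe_x hst (by omega) j0 i (by omega)
      · intro j hj; exact probe_y hst (by omega) j1 j (by omega)
    · rw [Ideal.span_le]
      rintro g hg
      simp only [Set.mem_union, Set.mem_insert_iff, Set.mem_singleton_iff,
        Set.mem_range] at hg
      have hC : ∀ w : R,
          (w * (X 0 ^ (n+1-ℓ)) ∈ J) → (w * X 1 ∈ J) →
          w ∈ Submodule.colon J (Ideal.span ({X 0 ^ (n+1-ℓ), X 1} ∪
            Set.range fun i : Fin r => (X i.succ.succ : R))) := by
        intro w ha hb
        refine mem_colon_span ?_
        intro g hg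
        simp only [Set.mem_union, Set.mem_insert_iff, Set.mem_singleton_iff,
          Set.mem_range] at hg
        rcases hg with (rfl | rfl) | ⟨i, rfl⟩
        · exact ha
        · exact hb
        · exact J.mul_mem_left w (hzJ i)
      rcases hg with (rfl | rfl | rfl) | ⟨i, rfl⟩
      · refine SetLike.mem_coe.mpr (hC _ ?_ ?_)
        · rw [← pow_add, show ℓ + (n+1-ℓ) = n + 1 by omega]; exact hxn1J
        · obtain ⟨q, hq⟩ : ∃ q, ℓ = q + 1 := ⟨ℓ - 1, by omega⟩
          rw [hq, show (X 0 : R) ^ (q+1) * X 1 = X 0 ^ q * (X 0 * X 1) by ring]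
          exact J.mul_mem_left _ hxyJ
      · exact SetLike.mem_coe.mpr (mem_colon_of_mem hxyJ _)
      · refine SetLike.mem_coe.mpr (hC _ ?_ ?_)
        · obtain ⟨e, he⟩ : ∃ e, n + 1 - ℓ = e + 1 := ⟨n - ℓ, by omega⟩
          rw [he, show (X 1 : R) ^ 3 * X 0 ^ (e+1) = (X 0 ^ e * X 1 ^ 2) * (X 0 * X 1) by ring]
          exact J.mul_mem_left _ hxyJ
        · rw [← pow_succ]; exact hy4J
      · exact SetLike.mem_coe.mpr (mem_colon_of_mem (hzJ i) _)
  · -- ℓ = n + 1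
    have hs1 : Submodule.colon J ((I ^ (n+1) : Ideal _)) = ⊤ := by
      rw [Ideal.eq_top_iff_one]
      refine hcolP _ _ ?_
      intro f hf
      rw [one_mul]
      have := hP1 (n+1) (by omega) 0 (by omega) f hf
      rwa [pow_zero, one_mul] at this
    rw [hs1, colon_top]
end

section
/- Set I_ℓ = J : I^{n+1−ℓ} for 1 ≤ ℓ ≤ n and I_{n+1} = J. Then I·I_ℓ ⊆ I_{ℓ+1} for all 1 ≤ ℓ ≤ n, so each quotient I_ℓ/I_{ℓ+1} is a k ≅ R/I-vector space, and: dim_k I_ℓ/I_{ℓ+1} = 1 for 1 ≤ ℓ ≤ n−3 (generated by the class of x^ℓ), dim_k I_{n−2}/I_{n−1} = 2 (generated by the classes of x^{n−2} and y), dim_k I_{n−1}/I_n = 2 (generated by the classes of x^{n−1} and y²), and dim_k I_n/I_{n+1} = 1. (These are the local ranks of the graded pieces L, …, L^{n−3}, F', E', Lⁿ of the module M(Y).) -/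
namespace Stmt15

open MvPowerSeries Finsupp

variable {k : Type} [Field k] {r : ℕ}

/-- The exponent of the monomial `x^a y^b`. -/
noncomputable def E (a b : ℕ) : Fin (r + 2) →₀ ℕ := Finsupp.single 0 a + Finsupp.single 1 b

lemma fin01 : (0 : Fin (r+2)) ≠ 1 := by
  intro h; have := congrArg Fin.val h; simp at this

@[simp] lemma E_apply0 (a b : ℕ) : (E a b : Fin (r+2) →₀ ℕ) 0 = a := by
  simp [E, Finsupp.single_apply, fin01]

@[simp] lemma E_apply1 (a b : ℕ) : (E a b : Fin (r+2) →₀ ℕ) 1 = b := by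
  simp [E, Finsupp.single_apply, fin01]

lemma E_apply_ge2 (a b : ℕ) (j : Fin (r+2)) (hj : 2 ≤ (j : ℕ)) :
    (E a b : Fin (r+2) →₀ ℕ) j = 0 := by
  have h0 : j ≠ 0 := by intro h; subst h; simp at hj
  have h1 : j ≠ 1 := by
    intro h; subst h; rw [Fin.val_one] at hj; omega
  simp only [E, Finsupp.add_apply, Finsupp.single_apply]
  rw [if_neg (fun h => h0 h.symm), if_neg (fun h => h1 h.symm)]
  simp

lemma fin_cases3 (j : Fin (r+2)) : j = 0 ∨ j = 1 ∨ ∃ i : Fin r, j = i.succ.succ := by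
  rcases Nat.lt_or_ge (j : ℕ) 2 with h | h
  · interval_cases hj : (j : ℕ)
    · left; exact Fin.ext (by simpa using hj)
    · right; left; exact Fin.ext (by simp [hj])
  · right; right
    refine ⟨⟨(j : ℕ) - 2, by omega⟩, Fin.ext ?_⟩
    simp [Fin.val_succ]
    omega

lemma E_add (a b c d : ℕ) : (E a b : Fin (r+2) →₀ ℕ) + E c d = E (a+c) (b+d) := by
  ext j
  rcases fin_cases3 j with rfl | rfl | ⟨i, rfl⟩ <;>
    simp [E_apply_ge2, Fin.val_succ]

lemma E_eq_iff {a b c d : ℕ} : (E a b : Fin (r+2) →₀ ℕ) = E c d ↔ a = c ∧ b = d := by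
  constructor
  · intro h
    exact ⟨by simpa using DFunLike.congr_fun h 0, by simpa using DFunLike.congr_fun h 1⟩
  · rintro ⟨rfl, rfl⟩; rfl

lemma eq_E_of_le_E {d : Fin (r+2) →₀ ℕ} {a b : ℕ} (h : d ≤ E a b) :
    d = E (d 0) (d 1) ∧ d 0 ≤ a ∧ d 1 ≤ b := by
  have hle : ∀ j, d j ≤ (E a b : Fin (r+2) →₀ ℕ) j := fun j => Finsupp.le_def.mp h j
  refine ⟨?_, by simpa using hle 0, by simpa using hle 1⟩
  ext j
  rcases fin_cases3 j with rfl | rfl | ⟨i, rfl⟩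
  · simp
  · simp
  · have := hle i.succ.succ
    rw [E_apply_ge2 _ _ _ (by simp [Fin.val_succ])] at this
    simp only [Nat.le_zero] at this
    rw [this, E_apply_ge2 _ _ _ (by simp [Fin.val_succ])]

lemma E_x (a : ℕ) : (E a 0 : Fin (r+2) →₀ ℕ) = Finsupp.single 0 a := by simp [E]

lemma E_y (b : ℕ) : (E 0 b : Fin (r+2) →₀ ℕ) = Finsupp.single 1 b := by simp [E]

lemma E_zero : (E 0 0 : Fin (r+2) →₀ ℕ) = 0 := by simp [E]

variable (k r) in
noncomputable def XX : MvPowerSeries (Fin (r+2)) k := MvPowerSeries.X 0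

variable (k r) in
noncomputable def YY : MvPowerSeries (Fin (r+2)) k := MvPowerSeries.X 1

variable (k r) in
noncomputable def ZZ (i : Fin r) : MvPowerSeries (Fin (r+2)) k := MvPowerSeries.X i.succ.succ

lemma XY_mono (a b : ℕ) :
    (XX k r) ^ a * (YY k r) ^ b = monomial (E a b) 1 := by
  rw [XX, YY, X_pow_eq, X_pow_eq, monomial_mul_monomial, one_mul]; rfl

lemma XX_mono (a : ℕ) : (XX k r) ^ a = monomial (E a 0) 1 := by
  rw [XX, X_pow_eq, E_x]

lemma YY_mono (b : ℕ) : (YY k r) ^ b = monomial (E 0 b) 1 := by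
  rw [YY, X_pow_eq, E_y]

lemma coeff_E_XY (a b c d : ℕ) :
    coeff (E a b) ((XX k r) ^ c * (YY k r) ^ d) = if c = a ∧ d = b then 1 else 0 := by
  rw [XY_mono, coeff_monomial]
  congr 1
  simp only [eq_iff_iff, E_eq_iff]
  tauto

lemma coeff_E_Z (a b : ℕ) (i : Fin r) : coeff (E a b) (ZZ k r i) = 0 := by
  rw [ZZ, MvPowerSeries.X, coeff_monomial, if_neg, ]
  intro h
  have := DFunLike.congr_fun h i.succ.succ
  rw [E_apply_ge2 _ _ _ (by simp [Fin.val_succ])] at this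
  simp [Finsupp.single_apply] at this

lemma coeff_mul_XX_pow (f : MvPowerSeries (Fin (r+2)) k) (a b c : ℕ) :
    coeff (E (a+c) b) (f * (XX k r) ^ c) = coeff (E a b) f := by
  rw [XX_mono, show (E (a+c) b : Fin (r+2) →₀ ℕ) = E a b + E c 0 by rw [E_add, add_zero], ]
  simpa using coeff_add_mul_monomial (E a b) (E c 0) f 1

lemma coeff_mul_YY_pow (f : MvPowerSeries (Fin (r+2)) k) (a b c : ℕ) :
    coeff (E a (b+c)) (f * (YY k r) ^ c) = coeff (E a b) f := by
  rw [YY_mono, show (E a (b+c) : Fin (r+2) →₀ ℕ) = E a b + E 0 c by rw [E_add, add_zero], ]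
  simpa using coeff_add_mul_monomial (E a b) (E 0 c) f 1

lemma coeff_E0b_mul_XX_pow (f : MvPowerSeries (Fin (r+2)) k) (b c : ℕ) (hc : 1 ≤ c) :
    coeff (E 0 b) (f * (XX k r) ^ c) = 0 := by
  rw [XX_mono, coeff_mul_monomial, if_neg]
  intro h
  have := Finsupp.le_def.mp h 0
  simp at this
  omega

lemma coeff_Ea0_mul_YY_pow (f : MvPowerSeries (Fin (r+2)) k) (a c : ℕ) (hc : 1 ≤ c) :
    coeff (E a 0) (f * (YY k r) ^ c) = 0 := by
  rw [YY_mono, coeff_mul_monomial, if_neg]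
  intro h
  have := Finsupp.le_def.mp h 1
  simp at this
  omega

lemma coeff_mul_of_low (u w : MvPowerSeries (Fin (r+2)) k) (m : Fin (r+2) →₀ ℕ)
    (hw : ∀ d, d ≤ m → d ≠ m → coeff d w = 0) :
    coeff m (u * w) = coeff 0 u * coeff m w := by
  classical
  rw [coeff_mul, Finset.sum_eq_single ((0 : Fin (r+2) →₀ ℕ), m)]
  · intro p hp hne
    rw [Finset.HasAntidiagonal.mem_antidiagonal] at hp
    have h2 : p.2 ≤ m := hp ▸ le_add_self
    have h3 : p.2 ≠ m := by
      rintro h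
      apply hne
      have h1 : p.1 = 0 := by
        have h4 : p.1 + m = 0 + m := by rw [zero_add]; rw [h] at hp; exact hp
        exact add_right_cancel h4
      rw [Prod.ext_iff]; exact ⟨h1, h⟩
    rw [hw _ h2 h3, mul_zero]
  · intro h
    exact absurd (Finset.HasAntidiagonal.mem_antidiagonal.mpr (zero_add m)) h
section Closure

variable {u w : MvPowerSeries (Fin (r+2)) k}

lemma M0 {a : ℕ} (h : ∀ a' ≤ a, coeff (E a' 0) w = 0) :
    coeff (E a 0) (u * w) = 0 := by
  rw [coeff_mul_of_low u w _ (fun d hd _ => by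
    obtain ⟨hdE, hd0, hd1⟩ := eq_E_of_le_E hd
    rw [hdE, Nat.le_zero.mp hd1]; exact h _ hd0), h a le_rfl, mul_zero]

lemma M1 (h0 : coeff (E 0 0) w = 0) (h1 : coeff (E 0 1) w = 0) :
    coeff (E 0 1) (u * w) = 0 := by
  rw [coeff_mul_of_low u w _ (fun d hd _ => by
    obtain ⟨hdE, hd0, hd1⟩ := eq_E_of_le_E hd
    rw [hdE, Nat.le_zero.mp hd0]
    interval_cases h : d 1
    · exact h0
    · exact h1), h1, mul_zero]

lemma M2 (h0 : coeff (E 0 0) w = 0) (h1 : coeff (E 0 1) w = 0)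
    (h2 : coeff (E 0 2) w = 0) :
    coeff (E 0 2) (u * w) = 0 := by
  rw [coeff_mul_of_low u w _ (fun d hd _ => by
    obtain ⟨hdE, hd0, hd1⟩ := eq_E_of_le_E hd
    rw [hdE, Nat.le_zero.mp hd0]
    interval_cases h : d 1
    · exact h0
    · exact h1
    · exact h2), h2, mul_zero]

lemma M3 {n : ℕ} (hn : 1 ≤ n) (hlow : ∀ a < n, coeff (E a 0) w = 0)
    (h1 : coeff (E 0 1) w = 0) (h2 : coeff (E 0 2) w = 0)
    (h3 : coeff (E n 0) w = coeff (E 0 3) w) :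
    coeff (E n 0) (u * w) = coeff (E 0 3) (u * w) := by
  have e1 : coeff (E n 0) (u * w) = coeff 0 u * coeff (E n 0) w := by
    apply coeff_mul_of_low
    intro d hd hne
    obtain ⟨hdE, hd0, hd1⟩ := eq_E_of_le_E hd
    rw [hdE, Nat.le_zero.mp hd1]
    rcases lt_or_eq_of_le hd0 with h | h
    · exact hlow _ h
    · exact absurd (by rw [hdE, Nat.le_zero.mp hd1, h]) hne
  have e2 : coeff (E 0 3) (u * w) = coeff 0 u * coeff (E 0 3) w := by
    apply coeff_mul_of_low
    intro d hd hne
    obtain ⟨hdE, hd0, hd1⟩ := eq_E_of_le_E hd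
    rw [hdE, Nat.le_zero.mp hd0]
    interval_cases h : d 1
    · exact hlow 0 hn
    · exact h1
    · exact h2
    · exact absurd (by rw [hdE, Nat.le_zero.mp hd0]) hne
  rw [e1, e2, h3]

end Closure
section Span

lemma span_vanish0 (c : ℕ) (S : Set (MvPowerSeries (Fin (r+2)) k))
    (hS : ∀ g ∈ S, ∀ a < c, coeff (E a 0) g = 0) :
    ∀ w ∈ Ideal.span S, ∀ a < c, coeff (E a 0) w = 0 := by
  intro w hw
  induction hw using Submodule.span_induction with
  | mem g hg => exact hS g hg
  | zero => intro a _; simp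
  | add u v _ _ hu hv => intro a ha; rw [map_add, hu a ha, hv a ha, add_zero]
  | smul u v _ hv =>
    intro a ha
    rw [smul_eq_mul]
    exact M0 (fun a' ha' => hv a' (lt_of_le_of_lt ha' ha))

lemma span_vanish01 (c : ℕ) (hc : 1 ≤ c) (S : Set (MvPowerSeries (Fin (r+2)) k))
    (hS : ∀ g ∈ S, (∀ a < c, coeff (E a 0) g = 0) ∧ coeff (E 0 1) g = 0) :
    ∀ w ∈ Ideal.span S, (∀ a < c, coeff (E a 0) w = 0) ∧ coeff (E 0 1) w = 0 := by
  intro w hw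
  induction hw using Submodule.span_induction with
  | mem g hg => exact hS g hg
  | zero => exact ⟨fun a _ => by simp, by simp⟩
  | add u v _ _ hu hv =>
    exact ⟨fun a ha => by rw [map_add, hu.1 a ha, hv.1 a ha, add_zero],
      by rw [map_add, hu.2, hv.2, add_zero]⟩
  | smul u v _ hv =>
    rw [smul_eq_mul]
    exact ⟨fun a ha => M0 (fun a' ha' => hv.1 a' (lt_of_le_of_lt ha' ha)),
      M1 (hv.1 0 hc) hv.2⟩

lemma span_vanish012 (c : ℕ) (hc : 1 ≤ c) (S : Set (MvPowerSeries (Fin (r+2)) k))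
    (hS : ∀ g ∈ S, (∀ a < c, coeff (E a 0) g = 0) ∧ coeff (E 0 1) g = 0 ∧
      coeff (E 0 2) g = 0) :
    ∀ w ∈ Ideal.span S, (∀ a < c, coeff (E a 0) w = 0) ∧ coeff (E 0 1) w = 0 ∧
      coeff (E 0 2) w = 0 := by
  intro w hw
  induction hw using Submodule.span_induction with
  | mem g hg => exact hS g hg
  | zero => exact ⟨fun a _ => by simp, by simp, by simp⟩
  | add u v _ _ hu hv =>
    exact ⟨fun a ha => by rw [map_add, hu.1 a ha, hv.1 a ha, add_zero],
      by rw [map_add, hu.2.1, hv.2.1, add_zero], by rw [map_add, hu.2.2, hv.2.2, add_zero]⟩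
  | smul u v _ hv =>
    rw [smul_eq_mul]
    exact ⟨fun a ha => M0 (fun a' ha' => hv.1 a' (lt_of_le_of_lt ha' ha)),
      M1 (hv.1 0 hc) hv.2.1, M2 (hv.1 0 hc) hv.2.1 hv.2.2⟩

lemma span_vanishJ (n : ℕ) (hn : 1 ≤ n) (S : Set (MvPowerSeries (Fin (r+2)) k))
    (hS : ∀ g ∈ S, (∀ a < n, coeff (E a 0) g = 0) ∧ coeff (E 0 1) g = 0 ∧
      coeff (E 0 2) g = 0 ∧ coeff (E n 0) g = coeff (E 0 3) g) :
    ∀ w ∈ Ideal.span S, (∀ a < n, coeff (E a 0) w = 0) ∧ coeff (E 0 1) w = 0 ∧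
      coeff (E 0 2) w = 0 ∧ coeff (E n 0) w = coeff (E 0 3) w := by
  intro w hw
  induction hw using Submodule.span_induction with
  | mem g hg => exact hS g hg
  | zero => exact ⟨fun a _ => by simp, by simp, by simp, by simp⟩
  | add u v _ _ hu hv =>
    exact ⟨fun a ha => by rw [map_add, hu.1 a ha, hv.1 a ha, add_zero],
      by rw [map_add, hu.2.1, hv.2.1, add_zero], by rw [map_add, hu.2.2.1, hv.2.2.1, add_zero],
      by rw [map_add, map_add, hu.2.2.2, hv.2.2.2]⟩
  | smul u v _ hv =>
    rw [smul_eq_mul]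
    exact ⟨fun a ha => M0 (fun a' ha' => hv.1 a' (lt_of_le_of_lt ha' ha)),
      M1 (hv.1 0 hn) hv.2.1, M2 (hv.1 0 hn) hv.2.1 hv.2.2.1,
      M3 hn hv.1 hv.2.1 hv.2.2.1 hv.2.2.2⟩

end Span

section Ideals

variable (k r) in
noncomputable def g1 (n : ℕ) : MvPowerSeries (Fin (r+2)) k := (YY k r) ^ 3 + (XX k r) ^ n

variable (k r) in
noncomputable def g2 : MvPowerSeries (Fin (r+2)) k := XX k r * YY k r

lemma coeff_XXpow (a b c : ℕ) :
    coeff (E a b) ((XX k r) ^ c) = if c = a ∧ 0 = b then 1 else 0 := by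
  simpa using coeff_E_XY (k := k) (r := r) a b c 0

lemma coeff_YYpow (a b c : ℕ) :
    coeff (E a b) ((YY k r) ^ c) = if 0 = a ∧ c = b then 1 else 0 := by
  simpa using coeff_E_XY (k := k) (r := r) a b 0 c

lemma coeff_g2 (a b : ℕ) :
    coeff (E a b) (g2 k r) = if 1 = a ∧ 1 = b then 1 else 0 := by
  simpa [g2] using coeff_E_XY (k := k) (r := r) a b 1 1

lemma coeff_g1 (n a b : ℕ) :
    coeff (E a b) (g1 k r n) =
      (if 0 = a ∧ 3 = b then 1 else 0) + (if n = a ∧ 0 = b then 1 else 0) := by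
  rw [g1, map_add, coeff_XXpow, coeff_YYpow]

lemma memJ_props (n : ℕ) (hn : 1 ≤ n) {w : MvPowerSeries (Fin (r+2)) k}
    (hw : w ∈ Ideal.span ({g1 k r n, g2 k r} ∪ Set.range (ZZ k r))) :
    (∀ a < n, coeff (E a 0) w = 0) ∧ coeff (E 0 1) w = 0 ∧
      coeff (E 0 2) w = 0 ∧ coeff (E n 0) w = coeff (E 0 3) w := by
  refine span_vanishJ n hn _ ?_ w hw
  intro g hg
  simp only [Set.mem_union, Set.mem_insert_iff, Set.mem_singleton_iff, Set.mem_range] at hg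
  rcases hg with (rfl | rfl) | ⟨i, rfl⟩
  · refine ⟨fun a ha => ?_, ?_, ?_, ?_⟩ <;> simp [coeff_g1] <;> omega
  · refine ⟨fun a ha => ?_, ?_, ?_, ?_⟩ <;> simp [coeff_g2]
  · exact ⟨fun a ha => coeff_E_Z a 0 i, coeff_E_Z 0 1 i, coeff_E_Z 0 2 i,
      by rw [coeff_E_Z, coeff_E_Z]⟩

lemma memK1_props (n c : ℕ) (hcn : c < n) {w : MvPowerSeries (Fin (r+2)) k}
    (hw : w ∈ Ideal.span ({g1 k r n, g2 k r, (XX k r) ^ c, YY k r} ∪ Set.range (ZZ k r))) :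
    ∀ a < c, coeff (E a 0) w = 0 := by
  refine span_vanish0 c _ ?_ w hw
  intro g hg
  simp only [Set.mem_union, Set.mem_insert_iff, Set.mem_singleton_iff, Set.mem_range] at hg
  rcases hg with (rfl | rfl | rfl | rfl) | ⟨i, rfl⟩
  · intro a ha; simp [coeff_g1]; try omega
  · intro a ha; simp [coeff_g2]
  · intro a ha; simp [coeff_XXpow]; try omega
  · intro a ha; simpa using (coeff_YYpow a 0 1 (k := k) (r := r)).trans (by simp)
  · intro a ha; exact coeff_E_Z a 0 i

lemma memK2_props (n : ℕ) (hn : 2 ≤ n) {w : MvPowerSeries (Fin (r+2)) k}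
    (hw : w ∈ Ideal.span ({g1 k r n, g2 k r, (XX k r) ^ (n-1), (YY k r) ^ 2} ∪
      Set.range (ZZ k r))) :
    (∀ a < n - 1, coeff (E a 0) w = 0) ∧ coeff (E 0 1) w = 0 := by
  refine span_vanish01 (n-1) (by omega) _ ?_ w hw
  intro g hg
  simp only [Set.mem_union, Set.mem_insert_iff, Set.mem_singleton_iff, Set.mem_range] at hg
  rcases hg with (rfl | rfl | rfl | rfl) | ⟨i, rfl⟩
  · exact ⟨fun a ha => by simp [coeff_g1]; try omega, by simp [coeff_g1]; try omega⟩
  · exact ⟨fun a ha => by simp [coeff_g2], by simp [coeff_g2]⟩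
  · exact ⟨fun a ha => by simp [coeff_XXpow]; try omega, by simp [coeff_XXpow]⟩
  · exact ⟨fun a ha => by simp [coeff_YYpow], by simp [coeff_YYpow]⟩
  · exact ⟨fun a ha => coeff_E_Z a 0 i, coeff_E_Z 0 1 i⟩

lemma memK3_props (n : ℕ) (hn : 1 ≤ n) {w : MvPowerSeries (Fin (r+2)) k}
    (hw : w ∈ Ideal.span ({g1 k r n, g2 k r, (XX k r) ^ n} ∪ Set.range (ZZ k r))) :
    (∀ a < n, coeff (E a 0) w = 0) ∧ coeff (E 0 1) w = 0 ∧ coeff (E 0 2) w = 0 := by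
  refine span_vanish012 n hn _ ?_ w hw
  intro g hg
  simp only [Set.mem_union, Set.mem_insert_iff, Set.mem_singleton_iff, Set.mem_range] at hg
  rcases hg with (rfl | rfl | rfl) | ⟨i, rfl⟩
  · exact ⟨fun a ha => by simp [coeff_g1]; try omega, by simp [coeff_g1]; try omega,
      by simp [coeff_g1]; try omega⟩
  · exact ⟨fun a ha => by simp [coeff_g2], by simp [coeff_g2], by simp [coeff_g2]⟩
  · exact ⟨fun a ha => by simp [coeff_XXpow]; try omega, by simp [coeff_XXpow],
      by simp [coeff_XXpow]⟩
  · exact ⟨fun a ha => coeff_E_Z a 0 i, coeff_E_Z 0 1 i, coeff_E_Z 0 2 i⟩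

end Ideals
section Division

open Classical in
noncomputable def res (S : Set (Fin (r+2) →₀ ℕ)) (f : MvPowerSeries (Fin (r+2)) k) :
    MvPowerSeries (Fin (r+2)) k :=
  fun d => if d ∈ S then coeff d f else 0

lemma coeff_res (S : Set (Fin (r+2) →₀ ℕ)) (f : MvPowerSeries (Fin (r+2)) k)
    (d : Fin (r+2) →₀ ℕ) [Decidable (d ∈ S)] :
    coeff d (res S f) = if d ∈ S then coeff d f else 0 := by
  rw [coeff_apply]
  unfold res
  congr

lemma exists_X_pow_mul (s : Fin (r+2)) (c : ℕ) (f : MvPowerSeries (Fin (r+2)) k)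
    (hf : ∀ d, d s < c → coeff d f = 0) :
    ∃ g, f = (MvPowerSeries.X s) ^ c * g := by
  refine ⟨(id (fun d => coeff (d + Finsupp.single s c) f) : MvPowerSeries (Fin (r+2)) k), ?_⟩
  ext d
  rw [X_pow_eq, coeff_monomial_mul]
  split_ifs with h
  · rw [one_mul, coeff_apply]
    show coeff d f = coeff ((d - Finsupp.single s c) + Finsupp.single s c) f
    rw [tsub_add_cancel_of_le h]
  · exact hf d (by rw [Finsupp.single_le_iff] at h; omega)

lemma coeff_X_pow_mul_add (s : Fin (r+2)) (c : ℕ) (d : Fin (r+2) →₀ ℕ)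
    (g : MvPowerSeries (Fin (r+2)) k) :
    coeff (d + Finsupp.single s c) ((MvPowerSeries.X s) ^ c * g) = coeff d g := by
  rw [X_pow_eq]
  have h := coeff_add_monomial_mul (R := k) (Finsupp.single s c) d g 1
  rw [one_mul] at h
  rw [add_comm d (Finsupp.single s c)]
  exact h

lemma exists_XY_mul (f : MvPowerSeries (Fin (r+2)) k)
    (hf : ∀ d, (d 0 = 0 ∨ d 1 = 0) → coeff d f = 0) :
    ∃ g, f = g2 k r * g := by
  obtain ⟨u, hu⟩ := exists_X_pow_mul 0 1 f (fun d hd => hf d (Or.inl (by omega)))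
  have hu1 : ∀ d, d 1 = 0 → coeff d u = 0 := by
    intro d hd
    have h2 := coeff_X_pow_mul_add 0 1 d u
    rw [← hu] at h2
    rw [← h2]
    apply hf
    right
    rw [Finsupp.add_apply, Finsupp.single_apply, if_neg (fun h => fin01 h), hd]
    rfl
  obtain ⟨v, hv⟩ := exists_X_pow_mul 1 1 u (fun d hd => hu1 d (by omega))
  refine ⟨v, ?_⟩
  rw [hu, hv, g2, XX, YY]
  ring

lemma mem_noZ_eq {d : Fin (r+2) →₀ ℕ} (h : ∀ j : Fin r, d j.succ.succ = 0)
    (h1 : d 1 = 0) : d = E (d 0) 0 := by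
  ext j
  rcases fin_cases3 j with rfl | rfl | ⟨i, rfl⟩
  · simp
  · simp [h1]
  · rw [h i, E_apply_ge2 _ _ _ (by simp [Fin.val_succ])]

lemma mem_noZ_eqY {d : Fin (r+2) →₀ ℕ} (h : ∀ j : Fin r, d j.succ.succ = 0)
    (h0 : d 0 = 0) : d = E 0 (d 1) := by
  ext j
  rcases fin_cases3 j with rfl | rfl | ⟨i, rfl⟩
  · simp [h0]
  · simp
  · rw [h i, E_apply_ge2 _ _ _ (by simp [Fin.val_succ])]

lemma sub_res_noz (f : MvPowerSeries (Fin (r+2)) k) :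
    f - res {d | ∀ j : Fin r, d j.succ.succ = 0} f ∈ Ideal.span (Set.range (ZZ k r)) := by
  classical
  suffices h : ∀ m : ℕ, m ≤ r →
      f - res {d | ∀ j : Fin r, (j : ℕ) < m → d j.succ.succ = 0} f ∈
        Ideal.span (Set.range (ZZ k r)) by
    have hr := h r le_rfl
    have hset : {d : Fin (r+2) →₀ ℕ | ∀ j : Fin r, d j.succ.succ = 0} =
        {d : Fin (r+2) →₀ ℕ | ∀ j : Fin r, (j : ℕ) < r → d j.succ.succ = 0} := by
      ext d
      exact ⟨fun hd j _ => hd j, fun hd j => hd j j.isLt⟩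
    rw [hset]
    exact hr
  intro m
  induction m with
  | zero =>
    intro _
    have : res {d : Fin (r+2) →₀ ℕ | ∀ j : Fin r, (j : ℕ) < 0 → d j.succ.succ = 0} f = f := by
      ext d
      rw [coeff_res]
      have hd : d ∈ {d : Fin (r+2) →₀ ℕ | ∀ j : Fin r, (j : ℕ) < 0 → d j.succ.succ = 0} :=
        fun j hj => absurd hj (Nat.not_lt_zero _)
      rw [if_pos hd]
    rw [this, sub_self]
    exact zero_mem _
  | succ m ih =>
    intro hm
    have hmr : m < r := by omega
    have hprev := ih (by omega)
    set S1 : Set (Fin (r+2) →₀ ℕ) := {d | ∀ j : Fin r, (j : ℕ) < m → d j.succ.succ = 0} with hS1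
    set S2 : Set (Fin (r+2) →₀ ℕ) := {d | ∀ j : Fin r, (j : ℕ) < m + 1 → d j.succ.succ = 0}
      with hS2
    have key : ∀ d : Fin (r+2) →₀ ℕ,
        d ((⟨m, hmr⟩ : Fin r)).succ.succ < 1 → coeff d (res S1 f - res S2 f) = 0 := by
      intro d hd
      rw [map_sub, coeff_res, coeff_res]
      by_cases h1 : d ∈ S1
      · have h2 : d ∈ S2 := by
          intro j hj
          rcases Nat.lt_or_ge (j : ℕ) m with hj' | hj'
          · exact h1 j hj'
          · have hjm : j = (⟨m, hmr⟩ : Fin r) := Fin.ext (by simp only [Fin.val_mk]; omega)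
            rw [hjm]; omega
        rw [if_pos h1, if_pos h2, sub_self]
      · have h2 : d ∉ S2 := fun hc => h1 (fun j hj => hc j (by omega))
        rw [if_neg h1, if_neg h2, sub_self]
    obtain ⟨g, hg⟩ := exists_X_pow_mul _ 1 _ key
    have hmem : res S1 f - res S2 f ∈ Ideal.span (Set.range (ZZ k r)) := by
      rw [hg, pow_one]
      exact Ideal.mul_mem_right g _ (Ideal.subset_span ⟨⟨m, hmr⟩, rfl⟩)
    have : f - res S2 f = (f - res S1 f) + (res S1 f - res S2 f) := by ring
    rw [this]
    exact add_mem hprev hmem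

end Division
section Decomp

variable (r) in
def NZ : Set (Fin (r+2) →₀ ℕ) := {d | ∀ j : Fin r, d j.succ.succ = 0}

lemma res_add_split (f : MvPowerSeries (Fin (r+2)) k)
    (hf : ∀ d ∈ NZ r, coeff d f = 0) : f ∈ Ideal.span (Set.range (ZZ k r)) := by
  classical
  have : res (NZ r) f = 0 := by
    ext d
    rw [coeff_res]
    split_ifs with h
    · rw [hf d h]; rfl
    · rfl
  have h2 := sub_res_noz (k := k) (r := r) f
  rw [show {d : Fin (r+2) →₀ ℕ | ∀ j : Fin r, d j.succ.succ = 0} = NZ r from rfl, this,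
    sub_zero] at h2
  exact h2

lemma decomp1 (c : ℕ) (hc : 1 ≤ c) (f : MvPowerSeries (Fin (r+2)) k)
    (hlow : ∀ a < c, coeff (E a 0) f = 0) :
    f ∈ Ideal.span (({(XX k r) ^ c, YY k r} : Set _) ∪ Set.range (ZZ k r)) := by
  classical
  set S1 : Set (Fin (r+2) →₀ ℕ) := {d | d ∈ NZ r ∧ d 1 = 0} with hS1
  set h1 := res S1 f with hh1
  -- the x-part
  have m3 : h1 ∈ Ideal.span (({(XX k r) ^ c, YY k r} : Set _) ∪ Set.range (ZZ k r)) := by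
    obtain ⟨g, hg⟩ := exists_X_pow_mul 0 c h1 (fun d hd => by
      rw [hh1, coeff_res]
      split_ifs with h
      · rw [mem_noZ_eq h.1 h.2]; exact hlow _ hd
      · rfl)
    rw [hg, show (MvPowerSeries.X 0 : MvPowerSeries (Fin (r+2)) k) ^ c = (XX k r) ^ c from rfl]
    exact Ideal.mul_mem_right g _ (Ideal.subset_span (by simp))
  -- the y-part
  have m2 : res (NZ r) f - h1 ∈
      Ideal.span (({(XX k r) ^ c, YY k r} : Set _) ∪ Set.range (ZZ k r)) := by
    obtain ⟨g, hg⟩ := exists_X_pow_mul 1 1 (res (NZ r) f - h1) (fun d hd => by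
      have hd1 : d 1 = 0 := by omega
      rw [map_sub, hh1, coeff_res, coeff_res]
      by_cases h : d ∈ NZ r
      · rw [if_pos h, if_pos (show d ∈ S1 from ⟨h, hd1⟩), sub_self]
      · rw [if_neg h, if_neg (fun hc' : d ∈ S1 => h hc'.1), sub_self])
    rw [hg, pow_one, show (MvPowerSeries.X 1 : MvPowerSeries (Fin (r+2)) k) = YY k r from rfl]
    exact Ideal.mul_mem_right g _ (Ideal.subset_span (by simp))
  have m1 : f - res (NZ r) f ∈
      Ideal.span (({(XX k r) ^ c, YY k r} : Set _) ∪ Set.range (ZZ k r)) := by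
    refine Ideal.span_mono Set.subset_union_right ?_
    exact sub_res_noz f
  have : f = (f - res (NZ r) f) + ((res (NZ r) f - h1) + h1) := by ring
  rw [this]
  exact add_mem m1 (add_mem m2 m3)

lemma decomp23 (c e : ℕ) (hc : 1 ≤ c) (he : 2 ≤ e) (f : MvPowerSeries (Fin (r+2)) k)
    (hlow : ∀ a < c, coeff (E a 0) f = 0)
    (hy : ∀ b, 1 ≤ b → b < e → coeff (E 0 b) f = 0) :
    f ∈ Ideal.span (({g2 k r, (XX k r) ^ c, (YY k r) ^ e} : Set _) ∪ Set.range (ZZ k r)) := by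
  classical
  set T : Set (MvPowerSeries (Fin (r+2)) k) :=
    ({g2 k r, (XX k r) ^ c, (YY k r) ^ e} : Set _) ∪ Set.range (ZZ k r) with hT
  set S1 : Set (Fin (r+2) →₀ ℕ) := {d | d ∈ NZ r ∧ d 1 = 0} with hS1
  set SU : Set (Fin (r+2) →₀ ℕ) := {d | d ∈ NZ r ∧ 1 ≤ d 1 ∧ 1 ≤ d 0} with hSU
  set SV : Set (Fin (r+2) →₀ ℕ) := {d | d ∈ NZ r ∧ 1 ≤ d 1 ∧ d 0 = 0} with hSV
  set h1 := res S1 f with hh1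
  set u := res SU f with hu
  set v := res SV f with hv
  have m3 : h1 ∈ Ideal.span T := by
    obtain ⟨g, hg⟩ := exists_X_pow_mul 0 c h1 (fun d hd => by
      rw [hh1, coeff_res]
      split_ifs with h
      · rw [mem_noZ_eq h.1 h.2]; exact hlow _ hd
      · rfl)
    rw [hg, show (MvPowerSeries.X 0 : MvPowerSeries (Fin (r+2)) k) ^ c = (XX k r) ^ c from rfl]
    exact Ideal.mul_mem_right g _ (Ideal.subset_span (by simp [hT]))
  have mu : u ∈ Ideal.span T := by
    obtain ⟨g, hg⟩ := exists_XY_mul u (fun d hd => by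
      rw [hu, coeff_res, if_neg]
      intro hc'
      obtain ⟨-, hd1', hd0'⟩ := hc'
      rcases hd with h | h <;> omega)
    rw [hg]
    exact Ideal.mul_mem_right g _ (Ideal.subset_span (by simp [hT]))
  have mv : v ∈ Ideal.span T := by
    obtain ⟨g, hg⟩ := exists_X_pow_mul 1 e v (fun d hd => by
      rw [hv, coeff_res]
      split_ifs with h
      · rw [mem_noZ_eqY h.1 h.2.2]
        exact hy _ h.2.1 hd
      · rfl)
    rw [hg, show (MvPowerSeries.X 1 : MvPowerSeries (Fin (r+2)) k) ^ e = (YY k r) ^ e from rfl]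
    exact Ideal.mul_mem_right g _ (Ideal.subset_span (by simp [hT]))
  have key : res (NZ r) f = h1 + u + v := by
    ext d
    rw [map_add, map_add, hh1, hu, hv, coeff_res, coeff_res, coeff_res, coeff_res]
    by_cases hN : d ∈ NZ r
    · rw [if_pos hN]
      by_cases hd1 : d 1 = 0
      · rw [if_pos (show d ∈ S1 from ⟨hN, hd1⟩),
          if_neg (fun h : d ∈ SU => by obtain ⟨-, h1', h0'⟩ := h; omega),
          if_neg (fun h : d ∈ SV => by obtain ⟨-, h1', h0'⟩ := h; omega)]
        ring
      · rw [if_neg (fun h : d ∈ S1 => by obtain ⟨-, h1'⟩ := h; omega)]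
        by_cases hd0 : d 0 = 0
        · rw [if_neg (fun h : d ∈ SU => by obtain ⟨-, h1', h0'⟩ := h; omega),
            if_pos (show d ∈ SV from ⟨hN, by omega, hd0⟩)]
          ring
        · rw [if_pos (show d ∈ SU from ⟨hN, by omega, by omega⟩),
            if_neg (fun h : d ∈ SV => by obtain ⟨-, h1', h0'⟩ := h; omega)]
          ring
    · rw [if_neg hN, if_neg (fun h : d ∈ S1 => hN h.1), if_neg (fun h : d ∈ SU => hN h.1),
        if_neg (fun h : d ∈ SV => hN h.1)]
      ring
  have m1 : f - res (NZ r) f ∈ Ideal.span T := by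
    refine Ideal.span_mono Set.subset_union_right ?_
    exact sub_res_noz f
  have : f = (f - res (NZ r) f) + res (NZ r) f := by ring
  rw [this]
  refine add_mem m1 ?_
  rw [key]
  exact add_mem (add_mem m3 mu) mv

end Decomp
section Chain

variable (k r) in
noncomputable def Jdef (n : ℕ) : Ideal (MvPowerSeries (Fin (r+2)) k) :=
  Ideal.span ({g1 k r n, g2 k r} ∪ Set.range (ZZ k r))

variable (k r) in
noncomputable def Idef : Ideal (MvPowerSeries (Fin (r+2)) k) :=
  Ideal.span ({XX k r, YY k r} ∪ Set.range (ZZ k r))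

variable (k r) in
noncomputable def K (n ℓ : ℕ) : Ideal (MvPowerSeries (Fin (r+2)) k) :=
  if ℓ ≤ n - 2 then
    Ideal.span ({g1 k r n, g2 k r, (XX k r) ^ ℓ, YY k r} ∪ Set.range (ZZ k r))
  else if ℓ = n - 1 then
    Ideal.span ({g1 k r n, g2 k r, (XX k r) ^ (n-1), (YY k r) ^ 2} ∪ Set.range (ZZ k r))
  else if ℓ = n then
    Ideal.span ({g1 k r n, g2 k r, (XX k r) ^ n} ∪ Set.range (ZZ k r))
  else Jdef k r n

variable (k r) in
lemma K_eq1 {n ℓ : ℕ} (h : ℓ ≤ n - 2) :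
    K k r n ℓ = Ideal.span ({g1 k r n, g2 k r, (XX k r) ^ ℓ, YY k r} ∪ Set.range (ZZ k r)) :=
  if_pos h

variable (k r) in
lemma K_eq2 {n : ℕ} (hn : 4 ≤ n) :
    K k r n (n-1) =
      Ideal.span ({g1 k r n, g2 k r, (XX k r) ^ (n-1), (YY k r) ^ 2} ∪ Set.range (ZZ k r)) := by
  rw [K, if_neg (by omega), if_pos rfl]

variable (k r) in
lemma K_eq3 {n : ℕ} (hn : 4 ≤ n) :
    K k r n n = Ideal.span ({g1 k r n, g2 k r, (XX k r) ^ n} ∪ Set.range (ZZ k r)) := by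
  rw [K, if_neg (by omega), if_neg (by omega), if_pos rfl]

variable (k r) in
lemma K_eq4 {n : ℕ} (hn : 4 ≤ n) : K k r n (n+1) = Jdef k r n := by
  rw [K, if_neg (by omega), if_neg (by omega), if_neg (by omega)]

lemma span_mul_span_le {S T : Set (MvPowerSeries (Fin (r+2)) k)}
    {U : Ideal (MvPowerSeries (Fin (r+2)) k)} (h : ∀ a ∈ S, ∀ b ∈ T, a * b ∈ U) :
    Ideal.span S * Ideal.span T ≤ U := by
  rw [Ideal.span_mul_span', Ideal.span_le]
  rintro c ⟨a, ha, b, hb, rfl⟩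
  exact h a ha b hb

lemma Kstep {n : ℕ} (hn : 4 ≤ n) (ℓ : ℕ) (h1 : 1 ≤ ℓ) (h2 : ℓ ≤ n) :
    K k r n ℓ * Idef k r ≤ K k r n (ℓ+1) := by
  obtain ⟨ℓ', rfl⟩ : ∃ ℓ', ℓ = ℓ' + 1 := ⟨ℓ - 1, by omega⟩
  rcases show ℓ' + 1 ≤ n - 3 ∨ ℓ' + 1 = n - 2 ∨ ℓ' + 1 = n - 1 ∨ ℓ' + 1 = n by omega with
    h | h | h | h
  · -- both first branch
    rw [K_eq1 k r (show ℓ' + 1 ≤ n - 2 by omega), K_eq1 k r (show ℓ' + 1 + 1 ≤ n - 2 by omega),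
      Idef]
    apply span_mul_span_le
    intro a ha b hb
    simp only [Set.mem_union, Set.mem_insert_iff, Set.mem_singleton_iff, Set.mem_range] at ha hb
    rcases hb with (rfl | rfl) | ⟨i, rfl⟩
    · -- b = XX
      rcases ha with (rfl | rfl | rfl | rfl) | ⟨i, rfl⟩
      · exact Ideal.mul_mem_right _ _ (Ideal.subset_span (by simp))
      · exact Ideal.mul_mem_right _ _ (Ideal.subset_span (by simp))
      · rw [← pow_succ]
        exact Ideal.subset_span (by simp)
      · rw [show YY k r * XX k r = g2 k r by rw [g2]; ring]
        exact Ideal.subset_span (by simp)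
      · exact Ideal.mul_mem_right _ _ (Ideal.subset_span (by simp))
    · -- b = YY
      rcases ha with (rfl | rfl | rfl | rfl) | ⟨i, rfl⟩
      · exact Ideal.mul_mem_right _ _ (Ideal.subset_span (by simp))
      · exact Ideal.mul_mem_right _ _ (Ideal.subset_span (by simp))
      · rw [show (XX k r) ^ (ℓ'+1) * YY k r = g2 k r * (XX k r) ^ ℓ' by rw [g2]; ring]
        exact Ideal.mul_mem_right _ _ (Ideal.subset_span (by simp))
      · exact Ideal.mul_mem_right _ _ (Ideal.subset_span (by simp))
      · exact Ideal.mul_mem_right _ _ (Ideal.subset_span (by simp))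
    · -- b = z i
      exact Ideal.mul_mem_left _ _ (Ideal.subset_span (by simp))
  · -- ℓ = n-2 → K (n-1)
    rw [K_eq1 k r (show ℓ' + 1 ≤ n - 2 by omega), show ℓ' + 1 + 1 = n - 1 by omega,
      K_eq2 k r hn, Idef]
    apply span_mul_span_le
    intro a ha b hb
    simp only [Set.mem_union, Set.mem_insert_iff, Set.mem_singleton_iff, Set.mem_range] at ha hb
    rcases hb with (rfl | rfl) | ⟨i, rfl⟩
    · rcases ha with (rfl | rfl | rfl | rfl) | ⟨i, rfl⟩
      · exact Ideal.mul_mem_right _ _ (Ideal.subset_span (by simp))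
      · exact Ideal.mul_mem_right _ _ (Ideal.subset_span (by simp))
      · rw [← pow_succ, show ℓ' + 1 + 1 = n - 1 by omega]
        exact Ideal.subset_span (by simp)
      · rw [show YY k r * XX k r = g2 k r by rw [g2]; ring]
        exact Ideal.subset_span (by simp)
      · exact Ideal.mul_mem_right _ _ (Ideal.subset_span (by simp))
    · rcases ha with (rfl | rfl | rfl | rfl) | ⟨i, rfl⟩
      · exact Ideal.mul_mem_right _ _ (Ideal.subset_span (by simp))
      · exact Ideal.mul_mem_right _ _ (Ideal.subset_span (by simp))
      · rw [show (XX k r) ^ (ℓ'+1) * YY k r = g2 k r * (XX k r) ^ ℓ' by rw [g2]; ring]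
        exact Ideal.mul_mem_right _ _ (Ideal.subset_span (by simp))
      · rw [show YY k r * YY k r = (YY k r) ^ 2 by ring]
        exact Ideal.subset_span (by simp)
      · exact Ideal.mul_mem_right _ _ (Ideal.subset_span (by simp))
    · exact Ideal.mul_mem_left _ _ (Ideal.subset_span (by simp))
  · -- ℓ = n-1 → K n
    rw [show ℓ' + 1 = n - 1 by omega, show n - 1 + 1 = n by omega, K_eq2 k r hn,
      K_eq3 k r hn, Idef]
    apply span_mul_span_le
    intro a ha b hb
    simp only [Set.mem_union, Set.mem_insert_iff, Set.mem_singleton_iff, Set.mem_range] at ha hb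
    rcases hb with (rfl | rfl) | ⟨i, rfl⟩
    · rcases ha with (rfl | rfl | rfl | rfl) | ⟨i, rfl⟩
      · exact Ideal.mul_mem_right _ _ (Ideal.subset_span (by simp))
      · exact Ideal.mul_mem_right _ _ (Ideal.subset_span (by simp))
      · rw [← pow_succ, show n - 1 + 1 = n by omega]
        exact Ideal.subset_span (by simp)
      · rw [show (YY k r) ^ 2 * XX k r = g2 k r * YY k r by rw [g2]; ring]
        exact Ideal.mul_mem_right _ _ (Ideal.subset_span (by simp))
      · exact Ideal.mul_mem_right _ _ (Ideal.subset_span (by simp))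
    · rcases ha with (rfl | rfl | rfl | rfl) | ⟨i, rfl⟩
      · exact Ideal.mul_mem_right _ _ (Ideal.subset_span (by simp))
      · exact Ideal.mul_mem_right _ _ (Ideal.subset_span (by simp))
      · rw [show (XX k r) ^ (n-1) * YY k r = g2 k r * (XX k r) ^ (n-2) by
          rw [g2, show n - 1 = (n-2) + 1 by omega]; ring]
        exact Ideal.mul_mem_right _ _ (Ideal.subset_span (by simp))
      · rw [show (YY k r) ^ 2 * YY k r = g1 k r n - (XX k r) ^ n by rw [g1]; ring]
        exact sub_mem (Ideal.subset_span (by simp)) (Ideal.subset_span (by simp))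
      · exact Ideal.mul_mem_right _ _ (Ideal.subset_span (by simp))
    · exact Ideal.mul_mem_left _ _ (Ideal.subset_span (by simp))
  · -- ℓ = n → J
    rw [show ℓ' + 1 = n by omega, K_eq3 k r hn, K_eq4 k r hn, Jdef, Idef]
    apply span_mul_span_le
    intro a ha b hb
    simp only [Set.mem_union, Set.mem_insert_iff, Set.mem_singleton_iff, Set.mem_range] at ha hb
    rcases hb with (rfl | rfl) | ⟨i, rfl⟩
    · rcases ha with (rfl | rfl | rfl) | ⟨i, rfl⟩
      · exact Ideal.mul_mem_right _ _ (Ideal.subset_span (by simp))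
      · exact Ideal.mul_mem_right _ _ (Ideal.subset_span (by simp))
      · rw [show (XX k r) ^ n * XX k r = g1 k r n * XX k r - g2 k r * (YY k r) ^ 2 by
          rw [g1, g2]; ring]
        exact sub_mem (Ideal.mul_mem_right _ _ (Ideal.subset_span (by simp)))
          (Ideal.mul_mem_right _ _ (Ideal.subset_span (by simp)))
      · exact Ideal.mul_mem_right _ _ (Ideal.subset_span (by simp))
    · rcases ha with (rfl | rfl | rfl) | ⟨i, rfl⟩
      · exact Ideal.mul_mem_right _ _ (Ideal.subset_span (by simp))
      · exact Ideal.mul_mem_right _ _ (Ideal.subset_span (by simp))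
      · have hx : (XX k r) ^ n = XX k r * (XX k r) ^ (n-1) := by
          conv_lhs => rw [show n = (n-1) + 1 by omega]
          ring
        rw [show (XX k r) ^ n * YY k r = g2 k r * (XX k r) ^ (n-1) by rw [g2, hx]; ring]
        exact Ideal.mul_mem_right _ _ (Ideal.subset_span (by simp))
      · exact Ideal.mul_mem_right _ _ (Ideal.subset_span (by simp))
    · exact Ideal.mul_mem_left _ _ (Ideal.subset_span (by simp))

lemma Kpow {n : ℕ} (hn : 4 ≤ n) :
    ∀ m ℓ : ℕ, 1 ≤ ℓ → ℓ + m ≤ n + 1 → K k r n ℓ * (Idef k r) ^ m ≤ K k r n (ℓ + m) := by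
  intro m
  induction m with
  | zero => intro ℓ _ _; rw [pow_zero, mul_one, add_zero]
  | succ m ih =>
    intro ℓ h1 h2
    have e : (Idef k r) ^ (m+1) = Idef k r * (Idef k r) ^ m := by rw [pow_succ]; ring
    rw [e, ← mul_assoc]
    calc K k r n ℓ * Idef k r * (Idef k r) ^ m
        ≤ K k r n (ℓ+1) * (Idef k r) ^ m :=
          Ideal.mul_mono_left (Kstep hn ℓ h1 (by omega))
      _ ≤ K k r n (ℓ + 1 + m) := ih (ℓ+1) (by omega) (by omega)
      _ = K k r n (ℓ + (m+1)) := by rw [show ℓ + 1 + m = ℓ + (m+1) by omega]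

end Chain
section Colon

lemma XX_mem_Idef : XX k r ∈ Idef k r := Ideal.subset_span (by simp)
lemma YY_mem_Idef : YY k r ∈ Idef k r := Ideal.subset_span (by simp)

lemma le_colon {n : ℕ} (hn : 4 ≤ n) (ℓ : ℕ) (h1 : 1 ≤ ℓ) (h2 : ℓ ≤ n) :
    K k r n ℓ ≤ Submodule.colon (Jdef k r n) (((Idef k r) ^ (n + 1 - ℓ) : Ideal (MvPowerSeries (Fin (r+2)) k)) : Set (MvPowerSeries (Fin (r+2)) k)) := by
  intro w hw
  rw [Submodule.mem_colon]
  intro p hp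
  rw [smul_eq_mul]
  have hle := Kpow (k := k) (r := r) hn (n+1-ℓ) ℓ h1 (by omega)
  have hm := hle (Ideal.mul_mem_mul hw hp)
  rwa [show ℓ + (n+1-ℓ) = n+1 by omega, K_eq4 k r hn] at hm

lemma colon_le {n : ℕ} (hn : 4 ≤ n) (ℓ : ℕ) (h1 : 1 ≤ ℓ) (h2 : ℓ ≤ n) :
    Submodule.colon (Jdef k r n) (((Idef k r) ^ (n + 1 - ℓ) : Ideal (MvPowerSeries (Fin (r+2)) k)) : Set (MvPowerSeries (Fin (r+2)) k)) ≤ K k r n ℓ := by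
  intro f hf
  have hm1 : 1 ≤ n + 1 - ℓ := by omega
  have hfx : f * (XX k r) ^ (n+1-ℓ) ∈ Jdef k r n := by
    have := Submodule.mem_colon.mp hf ((XX k r) ^ (n+1-ℓ))
      (Ideal.pow_mem_pow XX_mem_Idef _)
    rwa [smul_eq_mul] at this
  have JP := memJ_props n (by omega) (by rw [Jdef] at hfx; exact hfx)
  have hlow : ∀ a, a + (n+1-ℓ) ≤ n → coeff (E a 0) f = 0 := by
    intro a ha
    have h3 := coeff_mul_XX_pow f a 0 (n+1-ℓ)
    rcases Nat.lt_or_ge (a + (n+1-ℓ)) n with h4 | h4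
    · rw [← h3]; exact JP.1 _ h4
    · have h5 : a + (n+1-ℓ) = n := by omega
      rw [← h3, h5, JP.2.2.2]
      exact coeff_E0b_mul_XX_pow f 3 _ hm1
  rcases show ℓ ≤ n - 2 ∨ ℓ = n - 1 ∨ ℓ = n by omega with h | h | h
  · rw [K_eq1 k r h]
    refine Ideal.span_mono ?_ (decomp1 ℓ h1 f (fun a ha => hlow a (by omega)))
    intro t ht
    simp only [Set.mem_union, Set.mem_insert_iff, Set.mem_singleton_iff] at ht ⊢
    tauto
  · subst h
    have h2' : n + 1 - (n-1) = 2 := by omega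
    have hfy : f * (YY k r) ^ 2 ∈ Jdef k r n := by
      have := Submodule.mem_colon.mp hf ((YY k r) ^ 2)
        (by rw [h2']; exact Ideal.pow_mem_pow YY_mem_Idef 2)
      rwa [smul_eq_mul] at this
    have JP2 := memJ_props n (by omega) (by rw [Jdef] at hfy; exact hfy)
    have hy : coeff (E 0 1) f = 0 := by
      have h3 := coeff_mul_YY_pow f 0 1 2
      rw [← h3, show (1+2 : ℕ) = 3 by norm_num, ← JP2.2.2.2]
      exact coeff_Ea0_mul_YY_pow f n 2 (by omega)
    rw [K_eq2 k r hn]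
    refine Ideal.span_mono ?_ (decomp23 (n-1) 2 (by omega) le_rfl f
      (fun a ha => hlow a (by omega)) (fun b hb1 hb2 => by
        rw [show b = 1 by omega]; exact hy))
    intro t ht
    simp only [Set.mem_union, Set.mem_insert_iff, Set.mem_singleton_iff] at ht ⊢
    tauto
  · rw [h] at hf hlow ⊢
    have h2' : n + 1 - n = 1 := by omega
    have hfy : f * YY k r ∈ Jdef k r n := by
      have := Submodule.mem_colon.mp hf (YY k r) (by rw [h2', pow_one]; exact YY_mem_Idef)
      rwa [smul_eq_mul] at this
    have JP2 := memJ_props n (by omega) (by rw [Jdef] at hfy; exact hfy)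
    have hy1 : coeff (E 0 1) f = 0 := by
      have h3 := coeff_mul_YY_pow f 0 1 1
      rw [pow_one] at h3
      rw [← h3, show (1+1 : ℕ) = 2 by norm_num]
      exact JP2.2.2.1
    have hy2 : coeff (E 0 2) f = 0 := by
      have h3 := coeff_mul_YY_pow f 0 2 1
      rw [pow_one] at h3
      rw [← h3, show (2+1 : ℕ) = 3 by norm_num, ← JP2.2.2.2]
      have h4 := coeff_Ea0_mul_YY_pow f n 1 le_rfl
      rw [pow_one] at h4
      exact h4
    have hsub : Ideal.span (({g2 k r, (XX k r) ^ n, (YY k r) ^ 3} : Set _) ∪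
        Set.range (ZZ k r)) ≤ K k r n n := by
      rw [Ideal.span_le, K_eq3 k r hn]
      rintro t ht
      simp only [Set.mem_union, Set.mem_insert_iff, Set.mem_singleton_iff, Set.mem_range] at ht
      rcases ht with (rfl | rfl | rfl) | ⟨i, rfl⟩
      · exact Ideal.subset_span (by simp)
      · exact Ideal.subset_span (by simp)
      · rw [show (YY k r) ^ 3 = g1 k r n - (XX k r) ^ n by rw [g1]; ring]
        exact sub_mem (Ideal.subset_span (by simp)) (Ideal.subset_span (by simp))
      · exact Ideal.subset_span (by simp)
    refine hsub (decomp23 n 3 (by omega) (by omega) f (fun a ha => hlow a (by omega))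
      (fun b hb1 hb2 => ?_))
    interval_cases b
    · exact hy1
    · exact hy2

lemma colon_eq {n : ℕ} (hn : 4 ≤ n) (ℓ : ℕ) (h1 : 1 ≤ ℓ) (h2 : ℓ ≤ n) :
    Submodule.colon (Jdef k r n) (((Idef k r) ^ (n + 1 - ℓ) : Ideal (MvPowerSeries (Fin (r+2)) k)) : Set (MvPowerSeries (Fin (r+2)) k)) = K k r n ℓ :=
  le_antisymm (colon_le hn ℓ h1 h2) (le_colon hn ℓ h1 h2)

end Colon
section Graded

lemma sub_C_mem (q : MvPowerSeries (Fin (r+2)) k) :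
    q - MvPowerSeries.C (constantCoeff q) ∈ Idef k r := by
  have h0 : ∀ a < 1, coeff (E a 0)
      (q - MvPowerSeries.C (constantCoeff q)) = 0 := by
    intro a ha
    rw [show a = 0 by omega, map_sub, show (E 0 0 : Fin (r+2) →₀ ℕ) = 0 from E_zero]
    rw [coeff_zero_eq_constantCoeff]
    simp
  have hd := decomp1 1 le_rfl _ h0
  refine Ideal.span_le.mpr ?_ hd
  intro t ht
  simp only [Set.mem_union, Set.mem_insert_iff, Set.mem_singleton_iff, Set.mem_range] at ht
  rcases ht with (rfl | rfl) | ⟨i, rfl⟩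
  · rw [pow_one]; exact XX_mem_Idef
  · exact YY_mem_Idef
  · exact Ideal.subset_span (by simp)

lemma mk_smul (B : Ideal (MvPowerSeries (Fin (r+2)) k)) (c : k)
    (u : MvPowerSeries (Fin (r+2)) k) :
    Ideal.Quotient.mk B (c • u) = c • Ideal.Quotient.mk B u := by
  exact map_smul (Ideal.Quotient.mkₐ k B) c u

lemma C_mul_eq_smul (c : k) (v : MvPowerSeries (Fin (r+2)) k) :
    MvPowerSeries.C c * v = c • v := by
  rw [MvPowerSeries.c_eq_algebraMap, ← Algebra.smul_def]

lemma restrict_singleton (B : Ideal (MvPowerSeries (Fin (r+2)) k))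
    (v : MvPowerSeries (Fin (r+2)) k) (hv : ∀ q ∈ Idef k r, q * v ∈ B) :
    Submodule.restrictScalars k (Ideal.span {Ideal.Quotient.mk B v}) =
      Submodule.span k {Ideal.Quotient.mk B v} := by
  apply le_antisymm
  · intro w hw
    rw [Submodule.restrictScalars_mem] at hw
    obtain ⟨a, ha⟩ := Ideal.mem_span_singleton'.mp hw
    obtain ⟨q, rfl⟩ := Ideal.Quotient.mk_surjective a
    set c := constantCoeff q with hc
    have hq : q - MvPowerSeries.C c ∈ Idef k r := sub_C_mem q
    have key : Ideal.Quotient.mk B q * Ideal.Quotient.mk B v = c • Ideal.Quotient.mk B v := by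
      rw [← map_mul]
      have hqv : q * v = c • v + (q - MvPowerSeries.C c) * v := by
        rw [← C_mul_eq_smul]; ring
      rw [hqv, map_add, Ideal.Quotient.eq_zero_iff_mem.mpr (hv _ hq), add_zero, mk_smul]
    rw [← ha, key]
    exact Submodule.smul_mem _ c (Submodule.mem_span_singleton_self _)
  · rw [Submodule.span_le]
    intro t ht
    rw [Set.mem_singleton_iff] at ht
    subst ht
    exact Ideal.subset_span rfl

lemma restrict_pair (B : Ideal (MvPowerSeries (Fin (r+2)) k))
    (v w : MvPowerSeries (Fin (r+2)) k) (hv : ∀ q ∈ Idef k r, q * v ∈ B)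
    (hw : ∀ q ∈ Idef k r, q * w ∈ B) :
    Submodule.restrictScalars k (Ideal.span {Ideal.Quotient.mk B v, Ideal.Quotient.mk B w}) =
      Submodule.span k {Ideal.Quotient.mk B v, Ideal.Quotient.mk B w} := by
  apply le_antisymm
  · intro t ht
    rw [Submodule.restrictScalars_mem] at ht
    obtain ⟨a, b, hab⟩ := Ideal.mem_span_pair.mp ht
    obtain ⟨q, rfl⟩ := Ideal.Quotient.mk_surjective a
    obtain ⟨p, rfl⟩ := Ideal.Quotient.mk_surjective b
    have key : ∀ (q : MvPowerSeries (Fin (r+2)) k) (v : MvPowerSeries (Fin (r+2)) k),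
        (∀ s ∈ Idef k r, s * v ∈ B) →
        Ideal.Quotient.mk B q * Ideal.Quotient.mk B v =
          (constantCoeff q) • Ideal.Quotient.mk B v := by
      intro q v hv
      rw [← map_mul]
      have hqv : q * v = (constantCoeff q) • v +
          (q - MvPowerSeries.C (constantCoeff q)) * v := by
        rw [← C_mul_eq_smul]; ring
      rw [hqv, map_add, Ideal.Quotient.eq_zero_iff_mem.mpr (hv _ (sub_C_mem q)), add_zero,
        mk_smul]
    rw [← hab, key q v hv, key p w hw]
    exact Submodule.add_mem _
      (Submodule.smul_mem _ _ (Submodule.subset_span (by simp)))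
      (Submodule.smul_mem _ _ (Submodule.subset_span (by simp)))
  · rw [Submodule.span_le]
    intro t ht
    rcases ht with rfl | ht
    · exact Ideal.subset_span (by simp)
    · rw [Set.mem_singleton_iff] at ht
      subst ht
      exact Ideal.subset_span (by simp)

lemma map_eq_singleton {B : Ideal (MvPowerSeries (Fin (r+2)) k)}
    {S : Set (MvPowerSeries (Fin (r+2)) k)} {v : MvPowerSeries (Fin (r+2)) k}
    (hS : ∀ g ∈ S, g ∈ B) :
    (Ideal.span (insert v S)).map (Ideal.Quotient.mk B) =
      Ideal.span {Ideal.Quotient.mk B v} := by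
  apply le_antisymm
  · rw [Ideal.map_span, Ideal.span_le]
    rintro t ⟨g, hg, rfl⟩
    rcases Set.mem_insert_iff.mp hg with rfl | hg
    · exact Ideal.subset_span rfl
    · rw [Ideal.Quotient.eq_zero_iff_mem.mpr (hS g hg)]
      exact zero_mem _
  · rw [Ideal.span_le]
    intro t ht
    rw [Set.mem_singleton_iff] at ht
    subst ht
    exact Ideal.mem_map_of_mem _ (Ideal.subset_span (Set.mem_insert _ _))

lemma map_eq_pair {B : Ideal (MvPowerSeries (Fin (r+2)) k)}
    {S : Set (MvPowerSeries (Fin (r+2)) k)} {v w : MvPowerSeries (Fin (r+2)) k}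
    (hS : ∀ g ∈ S, g ∈ B) :
    (Ideal.span (insert v (insert w S))).map (Ideal.Quotient.mk B) =
      Ideal.span {Ideal.Quotient.mk B v, Ideal.Quotient.mk B w} := by
  apply le_antisymm
  · rw [Ideal.map_span, Ideal.span_le]
    rintro t ⟨g, hg, rfl⟩
    rcases Set.mem_insert_iff.mp hg with rfl | hg
    · exact Ideal.subset_span (by simp)
    · rcases Set.mem_insert_iff.mp hg with rfl | hg
      · exact Ideal.subset_span (by simp)
      · rw [Ideal.Quotient.eq_zero_iff_mem.mpr (hS g hg)]
        exact zero_mem _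
  · rw [Ideal.span_le]
    rintro t (rfl | ht)
    · exact Ideal.mem_map_of_mem _ (Ideal.subset_span (Set.mem_insert _ _))
    · rw [Set.mem_singleton_iff] at ht
      subst ht
      exact Ideal.mem_map_of_mem _
        (Ideal.subset_span (Set.mem_insert_of_mem _ (Set.mem_insert _ _)))

lemma finrank_pair {V : Type} [AddCommGroup V] [Module k V] {v w : V}
    (h : LinearIndependent k ![v, w]) :
    Module.finrank k (Submodule.span k {v, w}) = 2 := by
  have hr : Set.range ![v, w] = {v, w} := by
    ext t
    constructor
    · rintro ⟨i, rfl⟩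
      fin_cases i <;> simp
    · rintro (rfl | rfl)
      · exact ⟨0, rfl⟩
      · exact ⟨1, rfl⟩
  rw [← hr, finrank_span_eq_card h]
  simp

end Graded
lemma coeff_YY (a b : ℕ) :
    coeff (E a b) (YY k r) = if 0 = a ∧ 1 = b then 1 else 0 := by
  rw [← pow_one (YY k r)]
  exact coeff_YYpow a b 1

lemma coeff_XX (a b : ℕ) :
    coeff (E a b) (XX k r) = if 1 = a ∧ 0 = b then 1 else 0 := by
  rw [← pow_one (XX k r)]
  exact coeff_XXpow a b 1
end Stmt15
/-- For ideals `B ⊆ A` of `R`, the image of `A` in `R ⧸ B`, viewed as a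
`k`-submodule of `R ⧸ B`; this represents the subquotient `A/B`. -/
noncomputable def gradedPiece (k : Type) [Field k] {R : Type} [CommRing R] [Algebra k R]
    (A B : Ideal R) : Submodule k (R ⧸ B) :=
  Submodule.restrictScalars k (A.map (Ideal.Quotient.mk B))

namespace Stmt15

variable {k : Type} [Field k] {r : ℕ}

set_option maxHeartbeats 1000000 in
lemma part2' {n : ℕ} (hn : 4 ≤ n) (A B : Ideal (MvPowerSeries (Fin (r+2)) k)) (ℓ : ℕ)
    (h1 : 1 ≤ ℓ) (h2 : ℓ ≤ n - 3) (hA : A = K k r n ℓ) (hB : B = K k r n (ℓ+1)) :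
    gradedPiece k A B = Submodule.span k {Ideal.Quotient.mk B ((XX k r) ^ ℓ)} ∧
      Module.finrank k (gradedPiece k A B) = 1 := by
  rw [K_eq1 k r (show ℓ ≤ n - 2 by omega)] at hA
  rw [K_eq1 k r (show ℓ + 1 ≤ n - 2 by omega)] at hB
  have hset : ({g1 k r n, g2 k r, (XX k r) ^ ℓ, YY k r} : Set _) ∪ Set.range (ZZ k r) =
      insert ((XX k r) ^ ℓ)
        (({g1 k r n, g2 k r, YY k r} : Set _) ∪ Set.range (ZZ k r)) := by
    ext t; simp only [Set.mem_union, Set.mem_insert_iff, Set.mem_singleton_iff]; tauto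
  have hSsub : ∀ g ∈ ({g1 k r n, g2 k r, YY k r} : Set _) ∪ Set.range (ZZ k r),
      g ∈ B := by
    intro g hg
    rw [hB]
    refine Ideal.subset_span ?_
    simp only [Set.mem_union, Set.mem_insert_iff, Set.mem_singleton_iff] at hg ⊢
    tauto
  have hv : ∀ q ∈ Idef k r, q * (XX k r) ^ ℓ ∈ B := by
    intro q hq
    have hvK : (XX k r) ^ ℓ ∈ K k r n ℓ := by
      rw [K_eq1 k r (show ℓ ≤ n - 2 by omega)]
      exact Ideal.subset_span (by simp)
    have hm := Kstep hn ℓ h1 (by omega) (Ideal.mul_mem_mul hvK hq)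
    rw [K_eq1 k r (show ℓ + 1 ≤ n - 2 by omega), ← hB] at hm
    rwa [mul_comm]
  have heq : gradedPiece k A B =
      Submodule.span k {Ideal.Quotient.mk B ((XX k r) ^ ℓ)} := by
    unfold gradedPiece
    rw [hA, hset, map_eq_singleton hSsub, restrict_singleton _ _ hv]
  have hnz : Ideal.Quotient.mk B ((XX k r) ^ ℓ) ≠ 0 := by
    rw [Ne, Ideal.Quotient.eq_zero_iff_mem]
    intro hmem
    rw [hB] at hmem
    have hp := memK1_props n (ℓ+1) (by omega) hmem ℓ (by omega)
    rw [coeff_XXpow] at hp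
    simp at hp
  exact ⟨heq, by rw [heq]; exact finrank_span_singleton hnz⟩

set_option maxHeartbeats 1000000 in
lemma part3' {n : ℕ} (hn : 4 ≤ n) (A B : Ideal (MvPowerSeries (Fin (r+2)) k))
    (hA : A = K k r n (n-2)) (hB : B = K k r n (n-1)) :
    gradedPiece k A B = Submodule.span k {Ideal.Quotient.mk B ((XX k r) ^ (n-2)),
        Ideal.Quotient.mk B (YY k r)} ∧
      Module.finrank k (gradedPiece k A B) = 2 := by
  rw [K_eq1 k r le_rfl] at hA
  rw [K_eq2 k r hn] at hB
  have hset : ({g1 k r n, g2 k r, (XX k r) ^ (n-2), YY k r} : Set _) ∪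
      Set.range (ZZ k r) =
      insert ((XX k r) ^ (n-2)) (insert (YY k r)
        (({g1 k r n, g2 k r} : Set _) ∪ Set.range (ZZ k r))) := by
    ext t; simp only [Set.mem_union, Set.mem_insert_iff, Set.mem_singleton_iff]; tauto
  have hSsub : ∀ g ∈ ({g1 k r n, g2 k r} : Set _) ∪ Set.range (ZZ k r), g ∈ B := by
    intro g hg
    rw [hB]
    refine Ideal.subset_span ?_
    simp only [Set.mem_union, Set.mem_insert_iff, Set.mem_singleton_iff] at hg ⊢
    tauto
  have hva : ∀ v, v ∈ K k r n (n-2) → ∀ q ∈ Idef k r, q * v ∈ B := by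
    intro v hvK q hq
    have hm := Kstep hn (n-2) (by omega) (by omega) (Ideal.mul_mem_mul hvK hq)
    rw [show n - 2 + 1 = n - 1 by omega, K_eq2 k r hn, ← hB] at hm
    rwa [mul_comm]
  have hv := hva ((XX k r) ^ (n-2))
    (by rw [K_eq1 k r le_rfl]; exact Ideal.subset_span (by simp))
  have hw := hva (YY k r)
    (by rw [K_eq1 k r le_rfl]; exact Ideal.subset_span (by simp))
  have heq : gradedPiece k A B =
      Submodule.span k {Ideal.Quotient.mk B ((XX k r) ^ (n-2)),
        Ideal.Quotient.mk B (YY k r)} := by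
    unfold gradedPiece
    rw [hA, hset, map_eq_pair hSsub, restrict_pair _ _ _ hv hw]
  have hind : LinearIndependent k
      ![Ideal.Quotient.mk B ((XX k r) ^ (n-2)), Ideal.Quotient.mk B (YY k r)] := by
    rw [LinearIndependent.pair_iff]
    intro s t hst
    rw [← mk_smul, ← mk_smul, ← map_add, Ideal.Quotient.eq_zero_iff_mem, hB] at hst
    have hp := memK2_props n (by omega) hst
    have e1 := hp.1 (n-2) (by omega)
    have e2 := hp.2
    rw [map_add, LinearMap.map_smul, LinearMap.map_smul, coeff_XXpow, coeff_YY] at e1 e2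
    rw [if_pos ⟨rfl, rfl⟩, if_neg (by omega)] at e1
    rw [if_neg (by omega), if_pos ⟨rfl, rfl⟩] at e2
    constructor
    · simpa using e1
    · simpa using e2
  exact ⟨heq, by rw [heq]; exact finrank_pair hind⟩

set_option maxHeartbeats 1000000 in
lemma part4' {n : ℕ} (hn : 4 ≤ n) (A B : Ideal (MvPowerSeries (Fin (r+2)) k))
    (hA : A = K k r n (n-1)) (hB : B = K k r n n) :
    gradedPiece k A B = Submodule.span k {Ideal.Quotient.mk B ((XX k r) ^ (n-1)),
        Ideal.Quotient.mk B ((YY k r) ^ 2)} ∧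
      Module.finrank k (gradedPiece k A B) = 2 := by
  rw [K_eq2 k r hn] at hA
  rw [K_eq3 k r hn] at hB
  have hset : ({g1 k r n, g2 k r, (XX k r) ^ (n-1), (YY k r) ^ 2} : Set _) ∪
      Set.range (ZZ k r) =
      insert ((XX k r) ^ (n-1)) (insert ((YY k r) ^ 2)
        (({g1 k r n, g2 k r} : Set _) ∪ Set.range (ZZ k r))) := by
    ext t; simp only [Set.mem_union, Set.mem_insert_iff, Set.mem_singleton_iff]; tauto
  have hSsub : ∀ g ∈ ({g1 k r n, g2 k r} : Set _) ∪ Set.range (ZZ k r), g ∈ B := by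
    intro g hg
    rw [hB]
    refine Ideal.subset_span ?_
    simp only [Set.mem_union, Set.mem_insert_iff, Set.mem_singleton_iff] at hg ⊢
    tauto
  have hva : ∀ v, v ∈ K k r n (n-1) → ∀ q ∈ Idef k r, q * v ∈ B := by
    intro v hvK q hq
    have hm := Kstep hn (n-1) (by omega) (by omega) (Ideal.mul_mem_mul hvK hq)
    rw [show n - 1 + 1 = n by omega, K_eq3 k r hn, ← hB] at hm
    rwa [mul_comm]
  have hv := hva ((XX k r) ^ (n-1))
    (by rw [K_eq2 k r hn]; exact Ideal.subset_span (by simp))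
  have hw := hva ((YY k r) ^ 2)
    (by rw [K_eq2 k r hn]; exact Ideal.subset_span (by simp))
  have heq : gradedPiece k A B =
      Submodule.span k {Ideal.Quotient.mk B ((XX k r) ^ (n-1)),
        Ideal.Quotient.mk B ((YY k r) ^ 2)} := by
    unfold gradedPiece
    rw [hA, hset, map_eq_pair hSsub, restrict_pair _ _ _ hv hw]
  have hind : LinearIndependent k
      ![Ideal.Quotient.mk B ((XX k r) ^ (n-1)), Ideal.Quotient.mk B ((YY k r) ^ 2)] := by
    rw [LinearIndependent.pair_iff]
    intro s t hst
    rw [← mk_smul, ← mk_smul, ← map_add, Ideal.Quotient.eq_zero_iff_mem, hB] at hst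
    have hp := memK3_props n (by omega) hst
    have e1 := hp.1 (n-1) (by omega)
    have e2 := hp.2.2
    rw [map_add, LinearMap.map_smul, LinearMap.map_smul, coeff_XXpow, coeff_YYpow] at e1 e2
    rw [if_pos ⟨rfl, rfl⟩, if_neg (by omega)] at e1
    rw [if_neg (by omega), if_pos ⟨rfl, rfl⟩] at e2
    constructor
    · simpa using e1
    · simpa using e2
  exact ⟨heq, by rw [heq]; exact finrank_pair hind⟩

set_option maxHeartbeats 1000000 in
lemma part5' {n : ℕ} (hn : 4 ≤ n) (A B : Ideal (MvPowerSeries (Fin (r+2)) k))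
    (hA : A = K k r n n) (hB : B = Jdef k r n) :
    Module.finrank k (gradedPiece k A B) = 1 := by
  rw [K_eq3 k r hn] at hA
  have hset : ({g1 k r n, g2 k r, (XX k r) ^ n} : Set _) ∪ Set.range (ZZ k r) =
      insert ((XX k r) ^ n) (({g1 k r n, g2 k r} : Set _) ∪ Set.range (ZZ k r)) := by
    ext t; simp only [Set.mem_union, Set.mem_insert_iff, Set.mem_singleton_iff]; tauto
  have hSsub : ∀ g ∈ ({g1 k r n, g2 k r} : Set _) ∪ Set.range (ZZ k r), g ∈ B := by
    intro g hg
    rw [hB, Jdef]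
    exact Ideal.subset_span hg
  have hv : ∀ q ∈ Idef k r, q * (XX k r) ^ n ∈ B := by
    intro q hq
    have hvK : (XX k r) ^ n ∈ K k r n n := by
      rw [K_eq3 k r hn]
      exact Ideal.subset_span (by simp)
    have hm := Kstep hn n (by omega) le_rfl (Ideal.mul_mem_mul hvK hq)
    rw [K_eq4 k r hn, ← hB] at hm
    rwa [mul_comm]
  have heq : gradedPiece k A B =
      Submodule.span k {Ideal.Quotient.mk B ((XX k r) ^ n)} := by
    unfold gradedPiece
    rw [hA, hset, map_eq_singleton hSsub, restrict_singleton _ _ hv]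
  have hnz : Ideal.Quotient.mk B ((XX k r) ^ n) ≠ 0 := by
    rw [Ne, Ideal.Quotient.eq_zero_iff_mem]
    intro hmem
    rw [hB, Jdef] at hmem
    have hp := (memJ_props n (by omega) hmem).2.2.2
    rw [coeff_XXpow, coeff_XXpow, if_pos ⟨rfl, rfl⟩, if_neg (by omega)] at hp
    simp at hp
  rw [heq]
  exact finrank_span_singleton hnz

end Stmt15

open Stmt15 MvPowerSeries in
/-- The filtration `I_ℓ = J : I^{n+1−ℓ}` (with `I_{n+1} = J`) of the local model of a
`C_{3,n}` cuspidal structure satisfies `I·I_ℓ ⊆ I_{ℓ+1}`, and the graded pieces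
`I_ℓ/I_{ℓ+1}` are `k`-vector spaces of dimensions `1, …, 1, 2, 2, 1`, with the stated
generators. -/
theorem stmt_15 (k : Type) [Field k] (n r : ℕ) (hn : 4 ≤ n)
    (x y : MvPowerSeries (Fin (r + 2)) k) (z : Fin r → MvPowerSeries (Fin (r + 2)) k)
    (hx : x = MvPowerSeries.X 0) (hy : y = MvPowerSeries.X 1)
    (hz : ∀ i : Fin r, z i = MvPowerSeries.X i.succ.succ)
    (I J : Ideal (MvPowerSeries (Fin (r + 2)) k))
    (hI : I = Ideal.span ({x, y} ∪ Set.range z))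
    (hJ : J = Ideal.span ({y ^ 3 + x ^ n, x * y} ∪ Set.range z))
    (Iseq : ℕ → Ideal (MvPowerSeries (Fin (r + 2)) k))
    (hIseq : ∀ ℓ : ℕ, 1 ≤ ℓ → ℓ ≤ n → Iseq ℓ = Submodule.colon J ((I ^ (n + 1 - ℓ) : Ideal (MvPowerSeries (Fin (r + 2)) k)) : Set (MvPowerSeries (Fin (r + 2)) k)))
    (hItop : Iseq (n + 1) = J) :
    (∀ ℓ : ℕ, 1 ≤ ℓ → ℓ ≤ n → I * Iseq ℓ ≤ Iseq (ℓ + 1)) ∧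
    (∀ ℓ : ℕ, 1 ≤ ℓ → ℓ ≤ n - 3 →
      gradedPiece k (Iseq ℓ) (Iseq (ℓ + 1)) =
        Submodule.span k {Ideal.Quotient.mk (Iseq (ℓ + 1)) (x ^ ℓ)} ∧
      Module.finrank k (gradedPiece k (Iseq ℓ) (Iseq (ℓ + 1))) = 1) ∧
    (gradedPiece k (Iseq (n - 2)) (Iseq (n - 1)) =
        Submodule.span k {Ideal.Quotient.mk (Iseq (n - 1)) (x ^ (n - 2)),
          Ideal.Quotient.mk (Iseq (n - 1)) y} ∧
      Module.finrank k (gradedPiece k (Iseq (n - 2)) (Iseq (n - 1))) = 2) ∧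
    (gradedPiece k (Iseq (n - 1)) (Iseq n) =
        Submodule.span k {Ideal.Quotient.mk (Iseq n) (x ^ (n - 1)),
          Ideal.Quotient.mk (Iseq n) (y ^ 2)} ∧
      Module.finrank k (gradedPiece k (Iseq (n - 1)) (Iseq n)) = 2) ∧
    Module.finrank k (gradedPiece k (Iseq n) (Iseq (n + 1))) = 1 := by
  have hx2 : x = XX k r := hx
  have hy2 : y = YY k r := hy
  have hz2 : z = ZZ k r := funext fun i => hz i
  subst hx2 hy2 hz2
  have hI2 : I = Idef k r := by rw [hI, Idef]
  have hJ2 : J = Jdef k r n := by rw [hJ, Jdef, g1, g2]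
  have hK : ∀ ℓ : ℕ, 1 ≤ ℓ → ℓ ≤ n → Iseq ℓ = K k r n ℓ := fun ℓ a b => by
    rw [hIseq ℓ a b, hI2, hJ2, colon_eq hn ℓ a b]
  refine ⟨?_, ?_, ?_, ?_, ?_⟩
  · -- part 1 : I * Iseq ℓ ≤ Iseq (ℓ+1)
    intro ℓ h1 h2
    rcases eq_or_ne ℓ n with rfl | hne
    · rw [hIseq ℓ h1 le_rfl, hItop, show ℓ + 1 - ℓ = 1 by omega, pow_one]
      refine Ideal.mul_le.mpr fun a ha b hb => ?_
      have := Submodule.mem_colon.mp hb a ha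
      rw [smul_eq_mul] at this
      rwa [mul_comm]
    · have h2' : ℓ < n := lt_of_le_of_ne h2 hne
      rw [hIseq ℓ h1 h2, hIseq (ℓ+1) (by omega) (by omega)]
      refine Ideal.mul_le.mpr fun a ha b hb => ?_
      rw [Submodule.mem_colon]
      intro p hp
      rw [smul_eq_mul]
      have hap : a * p ∈ I ^ (n + 1 - ℓ) := by
        have he : I ^ (n + 1 - ℓ) = I * I ^ (n + 1 - (ℓ + 1)) := by
          rw [← pow_succ']
          congr 1
          omega
        rw [he]
        exact Ideal.mul_mem_mul ha hp
      have hm := Submodule.mem_colon.mp hb (a * p) hap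
      rw [smul_eq_mul] at hm
      rwa [show a * b * p = b * (a * p) by ring]
  · -- part 2 : graded pieces 1 ≤ ℓ ≤ n-3
    intro ℓ h1 h2
    exact part2' hn _ _ ℓ h1 h2 (hK ℓ h1 (by omega)) (hK (ℓ+1) (by omega) (by omega))
  · -- part 3
    exact part3' hn _ _ (hK (n-2) (by omega) (by omega)) (hK (n-1) (by omega) (by omega))
  · -- part 4
    exact part4' hn _ _ (hK (n-1) (by omega) (by omega)) (hK n (by omega) le_rfl)
  · -- part 5
    exact part5' hn _ _ (hK n (by omega) le_rfl) (by rw [hItop, hJ2])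
end

section
/- One has I₂·J₂ ⊆ I² ∩ J₃; the quotient (I² ∩ J₃)/(I·J₂) is a 1-dimensional k-vector space generated by the class of xy; the quotient (I·I₂)/(I² ∩ J₃) is a 1-dimensional k-vector space generated by the class of y²; moreover I₃ ∩ J₂ = (x³, xy, y², z₁, …, z_r), the quotient (I₃ ∩ J₂)/J₃ is a 1-dimensional k-vector space generated by the class of y², and J₂ + I₃ = I₂. (These are the local forms of the identifications K² ≅ II₂/(I²∩J₃) ≅ (I₃∩J₂)/J₃ and of the exact sequences 0 → L⊗K → S²E → F → 0 and 0 → K² → F → L² → 0 in the degree-2 analysis of C_{3,n} structures.) -/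
set_option maxHeartbeats 1000000

namespace C3nAux

noncomputable section

open MvPowerSeries Pointwise

variable {k : Type} [Field k] {σ : Type}

/-- The monomial ideal determined by the divisibility region of `M`. -/
def W (k : Type) [Field k] (σ : Type) (M : Set (σ →₀ ℕ)) :
    Ideal (MvPowerSeries σ k) where
  carrier := {f | ∀ e, coeff e f ≠ 0 → ∃ m ∈ M, m ≤ e}
  add_mem' := by
    intro a b ha hb e he
    by_cases h1 : coeff e a = 0
    · refine hb e fun h2 => he ?_
      rw [map_add, h1, h2, add_zero]
    · exact ha e h1
  zero_mem' := by intro e he; simp at he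
  smul_mem' := by
    intro c f hf e he
    rw [smul_eq_mul] at he
    classical
    rw [coeff_mul] at he
    obtain ⟨p, hp, hne⟩ := Finset.exists_ne_zero_of_sum_ne_zero he
    obtain ⟨m, hm, hle⟩ := hf p.2 (right_ne_zero_of_mul hne)
    rw [Finset.HasAntidiagonal.mem_antidiagonal] at hp
    exact ⟨m, hm, hle.trans (hp ▸ le_add_self)⟩

theorem mem_W {M : Set (σ →₀ ℕ)} {f : MvPowerSeries σ k} :
    f ∈ W k σ M ↔ ∀ e, coeff e f ≠ 0 → ∃ m ∈ M, m ≤ e := Iff.rfl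

theorem monomial_mem_W {M : Set (σ →₀ ℕ)} {m : σ →₀ ℕ} (hm : m ∈ M) (a : k) :
    (monomial m a : MvPowerSeries σ k) ∈ W k σ M := by
  intro e he
  exact ⟨m, hm, (eq_of_coeff_monomial_ne_zero he) ▸ le_rfl⟩

theorem W_mul_le (M₁ M₂ : Set (σ →₀ ℕ)) :
    W k σ M₁ * W k σ M₂ ≤ W k σ (M₁ + M₂) := by
  refine Ideal.mul_le.2 fun f hf g hg e he => ?_
  classical
  rw [coeff_mul] at he
  obtain ⟨p, hp, hne⟩ := Finset.exists_ne_zero_of_sum_ne_zero he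
  obtain ⟨m₁, hm₁, hle₁⟩ := hf p.1 (left_ne_zero_of_mul hne)
  obtain ⟨m₂, hm₂, hle₂⟩ := hg p.2 (right_ne_zero_of_mul hne)
  rw [Finset.HasAntidiagonal.mem_antidiagonal] at hp
  exact ⟨m₁ + m₂, Set.add_mem_add hm₁ hm₂, hp ▸ add_le_add hle₁ hle₂⟩

theorem W_inf_le (M₁ M₂ : Set (σ →₀ ℕ)) :
    W k σ M₁ ⊓ W k σ M₂ ≤ W k σ (Set.image2 (· ⊔ ·) M₁ M₂) := by
  intro f hf e he
  obtain ⟨h1, h2⟩ := Submodule.mem_inf.1 hf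
  obtain ⟨m₁, hm₁, hle₁⟩ := h1 e he
  obtain ⟨m₂, hm₂, hle₂⟩ := h2 e he
  exact ⟨m₁ ⊔ m₂, Set.mem_image2_of_mem hm₁ hm₂, sup_le hle₁ hle₂⟩

theorem W_le_span {M : Set (σ →₀ ℕ)} (hM : M.Finite) :
    W k σ M ≤ Ideal.span ((fun m => (monomial m 1 : MvPowerSeries σ k)) '' M) := by
  refine Set.Finite.induction_on (motive := fun M _ => W k σ M ≤
      Ideal.span ((fun m => (monomial m 1 : MvPowerSeries σ k)) '' M)) M hM ?_ ?_
  · intro f hf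
    have : f = 0 := by
      ext e
      by_contra he
      obtain ⟨m, hm, -⟩ := hf e (by simpa using he)
      exact hm
    simp [this]
  · intro m M' hm hMfin ih f hf
    set g : MvPowerSeries σ k := fun e' => coeff (m + e') f with hgdef
    have hg : ∀ e', coeff e' g = coeff (m + e') f := fun e' => rfl
    have hcoeff : ∀ e, coeff e ((monomial m 1 : MvPowerSeries σ k) * g) =
        if m ≤ e then coeff e f else 0 := by
      intro e
      rw [coeff_monomial_mul]
      by_cases h : m ≤ e
      · rw [if_pos h, if_pos h, one_mul, hg, add_tsub_cancel_of_le h]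
      · rw [if_neg h, if_neg h]
    have h2 : f - (monomial m 1 : MvPowerSeries σ k) * g ∈ W k σ M' := by
      intro e he
      rw [map_sub, hcoeff] at he
      by_cases h : m ≤ e
      · rw [if_pos h, sub_self] at he
        exact absurd rfl he
      · rw [if_neg h, sub_zero] at he
        obtain ⟨m', hm', hle⟩ := hf e he
        rcases hm' with rfl | hm'
        · exact absurd hle h
        · exact ⟨m', hm', hle⟩
    have h1 : f = (monomial m 1 : MvPowerSeries σ k) * g +
        (f - (monomial m 1 : MvPowerSeries σ k) * g) := by ring
    rw [h1]
    refine Submodule.add_mem _ ?_ ?_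
    · exact Ideal.mul_mem_right _ _
        (Ideal.subset_span ⟨m, Set.mem_insert _ _, rfl⟩)
    · exact Ideal.span_mono (Set.image_mono (Set.subset_insert _ _)) (ih h2)

theorem monomial_mem_of_le {T : Ideal (MvPowerSeries σ k)} {t e : σ →₀ ℕ} (h : t ≤ e)
    (ht : (monomial t 1 : MvPowerSeries σ k) ∈ T) :
    (monomial e 1 : MvPowerSeries σ k) ∈ T := by
  have he : (monomial e 1 : MvPowerSeries σ k) =
      monomial t 1 * monomial (e - t) 1 := by
    rw [monomial_mul_monomial, one_mul, add_tsub_cancel_of_le h]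
  rw [he]
  exact Ideal.mul_mem_right _ _ ht

theorem gradedPiece_eq (A B : Ideal (MvPowerSeries σ k)) (t : MvPowerSeries σ k)
    (htA : t ∈ A) (hle : A ≤ B ⊔ Ideal.span {t})
    (hmul : ∀ g : MvPowerSeries σ k, constantCoeff g = 0 → g * t ∈ B) :
    gradedPiece k A B = Submodule.span k {Ideal.Quotient.mk B t} := by
  apply le_antisymm
  · intro ξ hξ
    have hξ' : ξ ∈ A.map (Ideal.Quotient.mk B) := hξ
    obtain ⟨f, hfA, rfl⟩ :=
      (Ideal.mem_map_iff_of_surjective _ Ideal.Quotient.mk_surjective).1 hξ'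
    obtain ⟨b, hb, s, hs, rfl⟩ := Submodule.mem_sup.1 (hle hfA)
    obtain ⟨g, rfl⟩ := Ideal.mem_span_singleton'.1 hs
    set c := constantCoeff g with hc
    have h0 : constantCoeff (g - C c) = 0 := by simp [hc]
    have key : Ideal.Quotient.mk B (b + g * t) = c • Ideal.Quotient.mk B t := by
      have hsplit : b + g * t = (b + (g - C c) * t) + C c * t := by ring
      have hmem : b + (g - C c) * t ∈ B := B.add_mem hb (hmul _ h0)
      rw [hsplit, map_add, Ideal.Quotient.eq_zero_iff_mem.2 hmem, zero_add, map_mul,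
        MvPowerSeries.c_eq_algebraMap, Ideal.Quotient.mk_algebraMap, ← Algebra.smul_def]
    rw [key]
    exact Submodule.smul_mem _ _ (Submodule.mem_span_singleton_self _)
  · rw [Submodule.span_le, Set.singleton_subset_iff]
    exact Ideal.mem_map_of_mem _ htA

theorem finrank_graded (B : Ideal (MvPowerSeries σ k)) (t : MvPowerSeries σ k) (h : t ∉ B) :
    Module.finrank k (Submodule.span k {Ideal.Quotient.mk B t}) = 1 :=
  finrank_span_singleton (by
    rw [Ne, Ideal.Quotient.eq_zero_iff_mem]
    exact h)

/-! ### Exponents for the concrete computation -/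

variable (r : ℕ)

def e10 : Fin (r + 2) →₀ ℕ := Finsupp.single 0 1
def e01 : Fin (r + 2) →₀ ℕ := Finsupp.single 1 1
def e20 : Fin (r + 2) →₀ ℕ := Finsupp.single 0 2
def e02 : Fin (r + 2) →₀ ℕ := Finsupp.single 1 2
def e30 : Fin (r + 2) →₀ ℕ := Finsupp.single 0 3
def e03 : Fin (r + 2) →₀ ℕ := Finsupp.single 1 3
def e11 : Fin (r + 2) →₀ ℕ := Finsupp.single 0 1 + Finsupp.single 1 1
def zu (i : Fin r) : Fin (r + 2) →₀ ℕ := Finsupp.single i.succ.succ 1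

def MI : Set (Fin (r + 2) →₀ ℕ) := {e10 r, e01 r} ∪ Set.range (zu r)
def MI₂ : Set (Fin (r + 2) →₀ ℕ) := {e20 r, e01 r} ∪ Set.range (zu r)
def MI₃ : Set (Fin (r + 2) →₀ ℕ) := {e30 r, e01 r} ∪ Set.range (zu r)
def MJ₂ : Set (Fin (r + 2) →₀ ℕ) := {e20 r, e11 r, e02 r} ∪ Set.range (zu r)
def MJ₃ : Set (Fin (r + 2) →₀ ℕ) := {e30 r, e11 r, e03 r} ∪ Set.range (zu r)

theorem MI_fin : (MI r).Finite :=
  ((Set.finite_singleton _).insert _).union (Set.finite_range _)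
theorem MI₃_fin : (MI₃ r).Finite :=
  ((Set.finite_singleton _).insert _).union (Set.finite_range _)
theorem MJ₂_fin : (MJ₂ r).Finite :=
  (((Set.finite_singleton _).insert _).insert _).union (Set.finite_range _)
theorem MJ₃_fin : (MJ₃ r).Finite :=
  (((Set.finite_singleton _).insert _).insert _).union (Set.finite_range _)

theorem ss_ne_zero (i : Fin r) : (i.succ.succ : Fin (r + 2)) ≠ 0 := Fin.succ_ne_zero _

theorem ss_ne_one (i : Fin r) : (i.succ.succ : Fin (r + 2)) ≠ 1 := by
  intro h
  have h1 : i.succ.succ = Fin.succ (0 : Fin (r + 1)) := by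
    rw [Fin.succ_zero_eq_one']; exact h
  exact Fin.succ_ne_zero i (Fin.succ_injective _ h1)

theorem zero_ne_one'' : (0 : Fin (r + 2)) ≠ 1 := Fin.zero_ne_one' (n := r + 1)

theorem ss_injective {i j : Fin r} (h : (i.succ.succ : Fin (r + 2)) = j.succ.succ) : i = j :=
  Fin.succ_injective _ (Fin.succ_injective _ h)

theorem fin_cover (s : Fin (r + 2)) : s = 0 ∨ s = 1 ∨ ∃ i : Fin r, s = i.succ.succ := by
  refine Fin.cases (Or.inl rfl) (fun j => ?_) s
  refine Fin.cases (Or.inr (Or.inl ?_)) (fun i => Or.inr (Or.inr ⟨i, rfl⟩)) j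
  exact Fin.succ_zero_eq_one'

theorem unit_mem_MI (s : Fin (r + 2)) : Finsupp.single s 1 ∈ MI r := by
  rcases fin_cover r s with rfl | rfl | ⟨i, rfl⟩
  · exact Set.mem_union_left _ (Set.mem_insert _ _)
  · exact Set.mem_union_left _ (Set.mem_insert_of_mem _ rfl)
  · exact Set.mem_union_right _ ⟨i, rfl⟩

theorem MI_apply_ss_eq_zero {a : Fin (r + 2) →₀ ℕ} (ha : a ∈ MI r) {j : Fin r}
    (hne : a ≠ zu r j) : a j.succ.succ = 0 := by
  rcases ha with (rfl | rfl) | ⟨i, rfl⟩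
  · exact Finsupp.single_eq_of_ne (ss_ne_zero r j)
  · exact Finsupp.single_eq_of_ne (ss_ne_one r j)
  · exact Finsupp.single_eq_of_ne fun h => hne (by rw [ss_injective r h])

theorem add_zu_le {a₁ a₂ : Fin (r + 2) →₀ ℕ} (h₁ : a₁ ∈ MI r) {j : Fin r}
    (hne : a₁ ≠ zu r j) : a₁ + zu r j ≤ (a₁ + a₂) ⊔ zu r j := by
  rw [Finsupp.le_def]
  intro s
  rw [Finsupp.add_apply, Finsupp.sup_apply, Finsupp.add_apply]
  by_cases hs : s = (j.succ.succ : Fin (r + 2))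
  · subst hs
    rw [MI_apply_ss_eq_zero r h₁ hne]
    simp [zu]
  · have hz : zu r j s = 0 := Finsupp.single_eq_of_ne fun h => hs h
    rw [hz, add_zero]
    exact le_sup_of_le_left (Nat.le_add_right _ _)

theorem e11_le_sup : e11 r ≤ e01 r ⊔ e20 r := by
  rw [Finsupp.le_def]
  intro s
  rw [Finsupp.sup_apply]
  simp only [e11, e01, e20, Finsupp.add_apply, Finsupp.single_apply]
  split_ifs <;> simp [le_sup_iff]

theorem not_le_N3 {m : Fin (r + 2) →₀ ℕ} (hm : m ∈ MJ₃ r) : ¬ m ≤ e02 r := by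
  intro hle
  rw [Finsupp.le_def] at hle
  rcases hm with (rfl | rfl | rfl) | ⟨i, rfl⟩
  · have h := hle 0
    simp only [e30, e02, Finsupp.single_eq_same,
      Finsupp.single_eq_of_ne (zero_ne_one'' r)] at h
    omega
  · have h := hle 0
    simp only [e11, e02, Finsupp.add_apply, Finsupp.single_eq_same,
      Finsupp.single_eq_of_ne (zero_ne_one'' r).symm,
      Finsupp.single_eq_of_ne (zero_ne_one'' r)] at h
    omega
  · have h := hle 1
    simp only [e03, e02, Finsupp.single_eq_same] at h
    omega
  · have h := hle i.succ.succ
    simp only [zu, e02, Finsupp.single_eq_same,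
      Finsupp.single_eq_of_ne (ss_ne_one r i)] at h
    omega

theorem not_le_N1 {a b : Fin (r + 2) →₀ ℕ} (ha : a ∈ MI r) (hb : b ∈ MJ₂ r) :
    ¬ a + b ≤ e11 r := by
  intro hle
  rw [Finsupp.le_def] at hle
  rcases hb with (rfl | rfl | rfl) | ⟨j, rfl⟩
  · have h := hle 0
    simp only [e20, e11, Finsupp.add_apply, Finsupp.single_eq_same,
      Finsupp.single_eq_of_ne (zero_ne_one'' r)] at h
    omega
  · rcases ha with (rfl | rfl) | ⟨i, rfl⟩
    · have h := hle 0
      simp only [e10, e11, Finsupp.add_apply, Finsupp.single_eq_same,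
        Finsupp.single_eq_of_ne (zero_ne_one'' r)] at h
      omega
    · have h := hle 1
      simp only [e01, e11, Finsupp.add_apply, Finsupp.single_eq_same,
        Finsupp.single_eq_of_ne (zero_ne_one'' r).symm] at h
      omega
    · have h := hle i.succ.succ
      simp only [zu, e11, Finsupp.add_apply, Finsupp.single_eq_same,
        Finsupp.single_eq_of_ne (ss_ne_zero r i),
        Finsupp.single_eq_of_ne (ss_ne_one r i)] at h
      omega
  · have h := hle 1
    simp only [e02, e11, Finsupp.add_apply, Finsupp.single_eq_same,
      Finsupp.single_eq_of_ne (zero_ne_one'' r).symm] at h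
    omega
  · have h := hle j.succ.succ
    simp only [zu, e11, Finsupp.add_apply, Finsupp.single_eq_same,
      Finsupp.single_eq_of_ne (ss_ne_zero r j),
      Finsupp.single_eq_of_ne (ss_ne_one r j)] at h
    omega

end

end C3nAux

open C3nAux MvPowerSeries Pointwise in
/-- Degree-2 identifications for the local model of a `C_{3,n}` cuspidal structure:
`I₂·J₂ ⊆ I² ∩ J₃`; `(I² ∩ J₃)/(I·J₂)` is 1-dimensional generated by `xy`;
`(I·I₂)/(I² ∩ J₃)` is 1-dimensional generated by `y²`;
`I₃ ∩ J₂ = (x³, xy, y², z)`; `(I₃ ∩ J₂)/J₃` is 1-dimensional generated by `y²`;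
and `J₂ + I₃ = I₂`. -/
theorem stmt_18 (k : Type) [Field k] (n r : ℕ) (hn : 4 ≤ n)
    (x y : MvPowerSeries (Fin (r + 2)) k) (z : Fin r → MvPowerSeries (Fin (r + 2)) k)
    (hx : x = MvPowerSeries.X 0) (hy : y = MvPowerSeries.X 1)
    (hz : ∀ i : Fin r, z i = MvPowerSeries.X i.succ.succ)
    (I J I₂ I₃ J₂ J₃ : Ideal (MvPowerSeries (Fin (r + 2)) k))
    (hI : I = Ideal.span ({x, y} ∪ Set.range z))
    (hJ : J = Ideal.span ({y ^ 3 + x ^ n, x * y} ∪ Set.range z))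
    (hI₂ : I₂ = Ideal.span ({x ^ 2, y} ∪ Set.range z))
    (hI₃ : I₃ = Ideal.span ({x ^ 3, y} ∪ Set.range z))
    (hJ₂ : J₂ = Ideal.span ({x ^ 2, x * y, y ^ 2} ∪ Set.range z))
    (hJ₃ : J₃ = Ideal.span ({x ^ 3, x * y, y ^ 3} ∪ Set.range z)) :
    I₂ * J₂ ≤ I ^ 2 ⊓ J₃ ∧
    (gradedPiece k (I ^ 2 ⊓ J₃) (I * J₂) =
        Submodule.span k {Ideal.Quotient.mk (I * J₂) (x * y)} ∧
      Module.finrank k (gradedPiece k (I ^ 2 ⊓ J₃) (I * J₂)) = 1) ∧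
    (gradedPiece k (I * I₂) (I ^ 2 ⊓ J₃) =
        Submodule.span k {Ideal.Quotient.mk (I ^ 2 ⊓ J₃) (y ^ 2)} ∧
      Module.finrank k (gradedPiece k (I * I₂) (I ^ 2 ⊓ J₃)) = 1) ∧
    I₃ ⊓ J₂ = Ideal.span ({x ^ 3, x * y, y ^ 2} ∪ Set.range z) ∧
    (gradedPiece k (I₃ ⊓ J₂) J₃ =
        Submodule.span k {Ideal.Quotient.mk J₃ (y ^ 2)} ∧
      Module.finrank k (gradedPiece k (I₃ ⊓ J₂) J₃) = 1) ∧
    J₂ + I₃ = I₂ := by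
  clear hn hJ
  -- monomial forms of the generators
  have hxm : x = monomial (e10 r) 1 := by rw [hx]; exact X_def 0
  have hym : y = monomial (e01 r) 1 := by rw [hy]; exact X_def 1
  have hx2m : x ^ 2 = monomial (e20 r) 1 := by rw [hx]; exact X_pow_eq 0 2
  have hx3m : x ^ 3 = monomial (e30 r) 1 := by rw [hx]; exact X_pow_eq 0 3
  have hy2m : y ^ 2 = monomial (e02 r) 1 := by rw [hy]; exact X_pow_eq 1 2
  have hy3m : y ^ 3 = monomial (e03 r) 1 := by rw [hy]; exact X_pow_eq 1 3
  have hxym : x * y = monomial (e11 r) 1 := by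
    rw [hx, hy, X_def, X_def, monomial_mul_monomial, one_mul, e11]
  have hzm : ∀ i, z i = monomial (zu r i) 1 := by
    intro i; rw [hz i, zu]; exact X_def _
  -- memberships of the generators
  have hxI : x ∈ I := by
    rw [hI]; exact Ideal.subset_span (Set.mem_union_left _ (Set.mem_insert _ _))
  have hyI : y ∈ I := by
    rw [hI]; exact Ideal.subset_span (Set.mem_union_left _ (Set.mem_insert_of_mem _ rfl))
  have hzI : ∀ i, z i ∈ I := by
    intro i; rw [hI]; exact Ideal.subset_span (Set.mem_union_right _ ⟨i, rfl⟩)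
  have hx2I : x ^ 2 ∈ I := Ideal.pow_mem_of_mem _ hxI 2 two_pos
  have hy2I : y ^ 2 ∈ I := Ideal.pow_mem_of_mem _ hyI 2 two_pos
  have hx2I₂ : x ^ 2 ∈ I₂ := by
    rw [hI₂]; exact Ideal.subset_span (Set.mem_union_left _ (Set.mem_insert _ _))
  have hyI₂ : y ∈ I₂ := by
    rw [hI₂]; exact Ideal.subset_span (Set.mem_union_left _ (Set.mem_insert_of_mem _ rfl))
  have hzI₂ : ∀ i, z i ∈ I₂ := by
    intro i; rw [hI₂]; exact Ideal.subset_span (Set.mem_union_right _ ⟨i, rfl⟩)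
  have hx3I₃ : x ^ 3 ∈ I₃ := by
    rw [hI₃]; exact Ideal.subset_span (Set.mem_union_left _ (Set.mem_insert _ _))
  have hyI₃ : y ∈ I₃ := by
    rw [hI₃]; exact Ideal.subset_span (Set.mem_union_left _ (Set.mem_insert_of_mem _ rfl))
  have hzI₃ : ∀ i, z i ∈ I₃ := by
    intro i; rw [hI₃]; exact Ideal.subset_span (Set.mem_union_right _ ⟨i, rfl⟩)
  have hx2J₂ : x ^ 2 ∈ J₂ := by
    rw [hJ₂]; exact Ideal.subset_span (Set.mem_union_left _ (Set.mem_insert _ _))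
  have hxyJ₂ : x * y ∈ J₂ := by
    rw [hJ₂]
    exact Ideal.subset_span (Set.mem_union_left _ (Set.mem_insert_of_mem _ (Set.mem_insert _ _)))
  have hy2J₂ : y ^ 2 ∈ J₂ := by
    rw [hJ₂]
    exact Ideal.subset_span
      (Set.mem_union_left _ (Set.mem_insert_of_mem _ (Set.mem_insert_of_mem _ rfl)))
  have hzJ₂ : ∀ i, z i ∈ J₂ := by
    intro i; rw [hJ₂]; exact Ideal.subset_span (Set.mem_union_right _ ⟨i, rfl⟩)
  have hx3J₃ : x ^ 3 ∈ J₃ := by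
    rw [hJ₃]; exact Ideal.subset_span (Set.mem_union_left _ (Set.mem_insert _ _))
  have hxyJ₃ : x * y ∈ J₃ := by
    rw [hJ₃]
    exact Ideal.subset_span (Set.mem_union_left _ (Set.mem_insert_of_mem _ (Set.mem_insert _ _)))
  have hy3J₃ : y ^ 3 ∈ J₃ := by
    rw [hJ₃]
    exact Ideal.subset_span
      (Set.mem_union_left _ (Set.mem_insert_of_mem _ (Set.mem_insert_of_mem _ rfl)))
  have hzJ₃ : ∀ i, z i ∈ J₃ := by
    intro i; rw [hJ₃]; exact Ideal.subset_span (Set.mem_union_right _ ⟨i, rfl⟩)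
  have hI2mm : ∀ {f g : MvPowerSeries (Fin (r + 2)) k}, f ∈ I → g ∈ I → f * g ∈ I ^ 2 := by
    intro f g hf hg; rw [pow_two]; exact Ideal.mul_mem_mul hf hg
  -- upper bounds by monomial regions
  have hIW : I ≤ W k (Fin (r + 2)) (MI r) := by
    rw [hI, Ideal.span_le]
    rintro v hv
    simp only [Set.mem_union, Set.mem_insert_iff, Set.mem_singleton_iff, Set.mem_range] at hv
    rcases hv with (rfl | rfl) | ⟨i, rfl⟩
    · rw [hxm]
      exact monomial_mem_W (M := MI r) (Set.mem_union_left _ (Set.mem_insert _ _)) 1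
    · rw [hym]
      exact monomial_mem_W (M := MI r) (Set.mem_union_left _ (Set.mem_insert_of_mem _ rfl)) 1
    · rw [hzm i]
      exact monomial_mem_W (M := MI r) (Set.mem_union_right _ ⟨i, rfl⟩) 1
  have hI₃W : I₃ ≤ W k (Fin (r + 2)) (MI₃ r) := by
    rw [hI₃, Ideal.span_le]
    rintro v hv
    simp only [Set.mem_union, Set.mem_insert_iff, Set.mem_singleton_iff, Set.mem_range] at hv
    rcases hv with (rfl | rfl) | ⟨i, rfl⟩
    · rw [hx3m]
      exact monomial_mem_W (M := MI₃ r) (Set.mem_union_left _ (Set.mem_insert _ _)) 1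
    · rw [hym]
      exact monomial_mem_W (M := MI₃ r) (Set.mem_union_left _ (Set.mem_insert_of_mem _ rfl)) 1
    · rw [hzm i]
      exact monomial_mem_W (M := MI₃ r) (Set.mem_union_right _ ⟨i, rfl⟩) 1
  have hJ₂W : J₂ ≤ W k (Fin (r + 2)) (MJ₂ r) := by
    rw [hJ₂, Ideal.span_le]
    rintro v hv
    simp only [Set.mem_union, Set.mem_insert_iff, Set.mem_singleton_iff, Set.mem_range] at hv
    rcases hv with (rfl | rfl | rfl) | ⟨i, rfl⟩
    · rw [hx2m]
      exact monomial_mem_W (M := MJ₂ r) (Set.mem_union_left _ (Set.mem_insert _ _)) 1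
    · rw [hxym]
      exact monomial_mem_W (M := MJ₂ r) (Set.mem_union_left _ (Set.mem_insert_of_mem _ (Set.mem_insert _ _))) 1
    · rw [hy2m]
      exact monomial_mem_W (M := MJ₂ r)
        (Set.mem_union_left _ (Set.mem_insert_of_mem _ (Set.mem_insert_of_mem _ rfl))) 1
    · rw [hzm i]
      exact monomial_mem_W (M := MJ₂ r) (Set.mem_union_right _ ⟨i, rfl⟩) 1
  have hJ₃W : J₃ ≤ W k (Fin (r + 2)) (MJ₃ r) := by
    rw [hJ₃, Ideal.span_le]
    rintro v hv
    simp only [Set.mem_union, Set.mem_insert_iff, Set.mem_singleton_iff, Set.mem_range] at hv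
    rcases hv with (rfl | rfl | rfl) | ⟨i, rfl⟩
    · rw [hx3m]
      exact monomial_mem_W (M := MJ₃ r) (Set.mem_union_left _ (Set.mem_insert _ _)) 1
    · rw [hxym]
      exact monomial_mem_W (M := MJ₃ r) (Set.mem_union_left _ (Set.mem_insert_of_mem _ (Set.mem_insert _ _))) 1
    · rw [hy3m]
      exact monomial_mem_W (M := MJ₃ r)
        (Set.mem_union_left _ (Set.mem_insert_of_mem _ (Set.mem_insert_of_mem _ rfl))) 1
    · rw [hzm i]
      exact monomial_mem_W (M := MJ₃ r) (Set.mem_union_right _ ⟨i, rfl⟩) 1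
  -- monomials of `MI` lie in `I`, and `W (MI) ≤ I`
  have hMImem : ∀ a ∈ MI r, (monomial a 1 : MvPowerSeries (Fin (r + 2)) k) ∈ I := by
    intro a ha
    simp only [MI, Set.mem_union, Set.mem_insert_iff, Set.mem_singleton_iff, Set.mem_range] at ha
    rcases ha with (rfl | rfl) | ⟨i, rfl⟩
    · rw [← hxm]; exact hxI
    · rw [← hym]; exact hyI
    · rw [← hzm i]; exact hzI i
  have hWI : W k (Fin (r + 2)) (MI r) ≤ I := by
    refine (W_le_span (MI_fin r)).trans (Ideal.span_le.2 ?_)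
    rintro v ⟨m, hm, rfl⟩
    exact hMImem m hm
  -- power series with zero constant term lie in `I`
  have hsub : ∀ f : MvPowerSeries (Fin (r + 2)) k, constantCoeff f = 0 → f ∈ I := by
    intro f hf
    refine hWI (mem_W.2 ?_)
    intro e he
    have hene : e ≠ 0 := by
      rintro rfl
      rw [coeff_zero_eq_constantCoeff_apply] at he
      exact he hf
    obtain ⟨s, hs⟩ : ∃ s, e s ≠ 0 := by
      by_contra hc
      push_neg at hc
      exact hene (Finsupp.ext hc)
    exact ⟨Finsupp.single s 1, unit_mem_MI r s,
      Finsupp.single_le_iff.2 (Nat.one_le_iff_ne_zero.2 hs)⟩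
  -- `I·(y²) ≤ J₃`
  have hIy2J₃ : I * Ideal.span {y ^ 2} ≤ J₃ := by
    have hrw : I * Ideal.span {y ^ 2} =
        Ideal.span (({x, y} ∪ Set.range z) * {y ^ 2}) := by
      rw [hI, Ideal.span_mul_span']
    rw [hrw, Ideal.span_le]
    rintro v hv
    obtain ⟨a, ha, b, hb, rfl⟩ := Set.mem_mul.1 hv
    obtain rfl : b = y ^ 2 := hb
    simp only [Set.mem_union, Set.mem_insert_iff, Set.mem_singleton_iff, Set.mem_range] at ha
    rcases ha with (h | h) | ⟨i, rfl⟩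
    · rw [h, show x * y ^ 2 = x * y * y by ring]
      exact Ideal.mul_mem_right _ _ hxyJ₃
    · rw [h, show y * y ^ 2 = y ^ 3 by ring]
      exact hy3J₃
    · exact Ideal.mul_mem_right _ _ (hzJ₃ i)
  -- first conjunct
  have hI₂I : I₂ ≤ I := by
    rw [hI₂, Ideal.span_le]
    rintro v hv
    simp only [Set.mem_union, Set.mem_insert_iff, Set.mem_singleton_iff, Set.mem_range] at hv
    rcases hv with (rfl | rfl) | ⟨i, rfl⟩
    · exact hx2I
    · exact hyI
    · exact hzI i
  have hJ₂I : J₂ ≤ I := by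
    rw [hJ₂, Ideal.span_le]
    rintro v hv
    simp only [Set.mem_union, Set.mem_insert_iff, Set.mem_singleton_iff, Set.mem_range] at hv
    rcases hv with (rfl | rfl | rfl) | ⟨i, rfl⟩
    · exact hx2I
    · exact Ideal.mul_mem_right _ _ hxI
    · exact hy2I
    · exact hzI i
  have F1 : I₂ * J₂ ≤ I ^ 2 ⊓ J₃ := by
    refine le_inf ?_ ?_
    · rw [pow_two]
      exact Ideal.mul_mono hI₂I hJ₂I
    · have hrw : I₂ * J₂ = Ideal.span
          (({x ^ 2, y} ∪ Set.range z) * ({x ^ 2, x * y, y ^ 2} ∪ Set.range z)) := by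
        rw [hI₂, hJ₂, Ideal.span_mul_span']
      rw [hrw, Ideal.span_le]
      rintro v hv
      obtain ⟨a, ha, b, hb, rfl⟩ := Set.mem_mul.1 hv
      simp only [Set.mem_union, Set.mem_insert_iff, Set.mem_singleton_iff, Set.mem_range]
        at ha hb
      rcases ha with (rfl | h) | ⟨i, rfl⟩
      · rcases hb with (rfl | rfl | rfl) | ⟨j, rfl⟩
        · rw [show x ^ 2 * x ^ 2 = x ^ 3 * x by ring]
          exact Ideal.mul_mem_right _ _ hx3J₃
        · exact Ideal.mul_mem_left _ _ hxyJ₃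
        · rw [show x ^ 2 * y ^ 2 = x * y * (x * y) by ring]
          exact Ideal.mul_mem_right _ _ hxyJ₃
        · exact Ideal.mul_mem_left _ _ (hzJ₃ j)
      · rw [h]
        rcases hb with (rfl | rfl | rfl) | ⟨j, rfl⟩
        · rw [show y * x ^ 2 = x * y * x by ring]
          exact Ideal.mul_mem_right _ _ hxyJ₃
        · exact Ideal.mul_mem_left _ _ hxyJ₃
        · rw [show y * y ^ 2 = y ^ 3 by ring]
          exact hy3J₃
        · exact Ideal.mul_mem_left _ _ (hzJ₃ j)
      · exact Ideal.mul_mem_right _ _ (hzJ₃ i)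
  -- the inclusion `I² ⊓ J₃ ≤ I·J₂ + (xy)`
  have FE1 : I ^ 2 ⊓ J₃ ≤ I * J₂ ⊔ Ideal.span {x * y} := by
    have h1 : I ^ 2 ⊓ J₃ ≤ W k (Fin (r + 2))
        (Set.image2 (· ⊔ ·) (MI r + MI r) (MJ₃ r)) := by
      refine le_trans (inf_le_inf ?_ hJ₃W) (W_inf_le _ _)
      rw [pow_two]
      exact (Ideal.mul_mono hIW hIW).trans (W_mul_le _ _)
    refine h1.trans ((W_le_span (Set.Finite.image2 _ ((MI_fin r).add (MI_fin r))
      (MJ₃_fin r))).trans (Ideal.span_le.2 ?_))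
    rintro v ⟨m, hm, rfl⟩
    obtain ⟨a, ha, b, hb, rfl⟩ := Set.mem_image2.1 hm
    simp only [MJ₃, Set.mem_union, Set.mem_insert_iff, Set.mem_singleton_iff, Set.mem_range]
      at hb
    rcases hb with (rfl | rfl | rfl) | ⟨j, rfl⟩
    · refine monomial_mem_of_le le_sup_right (Submodule.mem_sup_left ?_)
      rw [← hx3m, show x ^ 3 = x * x ^ 2 by ring]
      exact Ideal.mul_mem_mul hxI hx2J₂
    · refine monomial_mem_of_le le_sup_right (Submodule.mem_sup_right ?_)
      rw [← hxym]
      exact Ideal.subset_span rfl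
    · refine monomial_mem_of_le le_sup_right (Submodule.mem_sup_left ?_)
      rw [← hy3m, show y ^ 3 = y * y ^ 2 by ring]
      exact Ideal.mul_mem_mul hyI hy2J₂
    · obtain ⟨a₁, h₁, a₂, h₂, rfl⟩ := Set.mem_add.1 ha
      by_cases hc1 : a₁ = zu r j
      · subst hc1
        refine monomial_mem_of_le le_sup_left (Submodule.mem_sup_left ?_)
        rw [show (monomial (zu r j + a₂) 1 : MvPowerSeries (Fin (r + 2)) k) =
          monomial (zu r j) 1 * monomial a₂ 1 by
            rw [monomial_mul_monomial, one_mul]]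
        exact Ideal.mul_mem_mul_rev (hMImem a₂ h₂) (by rw [← hzm j]; exact hzJ₂ j)
      · by_cases hc2 : a₂ = zu r j
        · subst hc2
          refine monomial_mem_of_le le_sup_left (Submodule.mem_sup_left ?_)
          rw [show (monomial (a₁ + zu r j) 1 : MvPowerSeries (Fin (r + 2)) k) =
            monomial a₁ 1 * monomial (zu r j) 1 by
              rw [monomial_mul_monomial, one_mul]]
          exact Ideal.mul_mem_mul (hMImem a₁ h₁) (by rw [← hzm j]; exact hzJ₂ j)
        · refine monomial_mem_of_le (add_zu_le r h₁ hc1) (Submodule.mem_sup_left ?_)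
          rw [show (monomial (a₁ + zu r j) 1 : MvPowerSeries (Fin (r + 2)) k) =
            monomial a₁ 1 * monomial (zu r j) 1 by
              rw [monomial_mul_monomial, one_mul]]
          exact Ideal.mul_mem_mul (hMImem a₁ h₁) (by rw [← hzm j]; exact hzJ₂ j)
  -- the inclusion `I·I₂ ≤ (I² ⊓ J₃) + (y²)`
  have FE2 : I * I₂ ≤ (I ^ 2 ⊓ J₃) ⊔ Ideal.span {y ^ 2} := by
    have hrw : I * I₂ = Ideal.span
        (({x, y} ∪ Set.range z) * ({x ^ 2, y} ∪ Set.range z)) := by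
      rw [hI, hI₂, Ideal.span_mul_span']
    rw [hrw, Ideal.span_le]
    rintro v hv
    obtain ⟨a, ha, b, hb, rfl⟩ := Set.mem_mul.1 hv
    simp only [Set.mem_union, Set.mem_insert_iff, Set.mem_singleton_iff, Set.mem_range]
      at ha hb
    rcases ha with (h | h) | ⟨i, rfl⟩
    · rw [h]
      rcases hb with (rfl | h') | ⟨j, rfl⟩
      · refine Submodule.mem_sup_left (Submodule.mem_inf.2 ⟨hI2mm hxI hx2I, ?_⟩)
        rw [show x * x ^ 2 = x ^ 3 by ring]
        exact hx3J₃
      · rw [h']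
        exact Submodule.mem_sup_left (Submodule.mem_inf.2 ⟨hI2mm hxI hyI, hxyJ₃⟩)
      · exact Submodule.mem_sup_left (Submodule.mem_inf.2
          ⟨hI2mm hxI (hzI j), Ideal.mul_mem_left _ _ (hzJ₃ j)⟩)
    · rw [h]
      rcases hb with (rfl | h') | ⟨j, rfl⟩
      · refine Submodule.mem_sup_left (Submodule.mem_inf.2 ⟨hI2mm hyI hx2I, ?_⟩)
        rw [show y * x ^ 2 = x * y * x by ring]
        exact Ideal.mul_mem_right _ _ hxyJ₃
      · rw [h']
        refine Submodule.mem_sup_right ?_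
        rw [show y * y = y ^ 2 by ring]
        exact Ideal.subset_span rfl
      · exact Submodule.mem_sup_left (Submodule.mem_inf.2
          ⟨hI2mm hyI (hzI j), Ideal.mul_mem_left _ _ (hzJ₃ j)⟩)
    · have hbI : b ∈ I := by
        rcases hb with (rfl | h') | ⟨j, rfl⟩
        · exact hx2I
        · rw [h']; exact hyI
        · exact hzI j
      exact Submodule.mem_sup_left (Submodule.mem_inf.2
        ⟨hI2mm (hzI i) hbI, Ideal.mul_mem_right _ _ (hzJ₃ i)⟩)
  -- `I₃ ⊓ J₂` computation
  have FE3le : I₃ ⊓ J₂ ≤ Ideal.span ({x ^ 3, x * y, y ^ 2} ∪ Set.range z) := by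
    have h1 : I₃ ⊓ J₂ ≤ W k (Fin (r + 2))
        (Set.image2 (· ⊔ ·) (MI₃ r) (MJ₂ r)) :=
      le_trans (inf_le_inf hI₃W hJ₂W) (W_inf_le _ _)
    refine h1.trans ((W_le_span (Set.Finite.image2 _ (MI₃_fin r) (MJ₂_fin r))).trans
      (Ideal.span_le.2 ?_))
    rintro v ⟨m, hm, rfl⟩
    obtain ⟨a, ha, b, hb, rfl⟩ := Set.mem_image2.1 hm
    simp only [MI₃, MJ₂, Set.mem_union, Set.mem_insert_iff, Set.mem_singleton_iff,
      Set.mem_range] at ha hb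
    have hx3T : x ^ 3 ∈ Ideal.span ({x ^ 3, x * y, y ^ 2} ∪ Set.range z) :=
      Ideal.subset_span (Set.mem_union_left _ (Set.mem_insert _ _))
    have hxyT : x * y ∈ Ideal.span ({x ^ 3, x * y, y ^ 2} ∪ Set.range z) :=
      Ideal.subset_span (Set.mem_union_left _ (Set.mem_insert_of_mem _ (Set.mem_insert _ _)))
    have hy2T : y ^ 2 ∈ Ideal.span ({x ^ 3, x * y, y ^ 2} ∪ Set.range z) :=
      Ideal.subset_span
        (Set.mem_union_left _ (Set.mem_insert_of_mem _ (Set.mem_insert_of_mem _ rfl)))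
    have hzT : ∀ i, z i ∈ Ideal.span ({x ^ 3, x * y, y ^ 2} ∪ Set.range z) := fun i =>
      Ideal.subset_span (Set.mem_union_right _ ⟨i, rfl⟩)
    rcases ha with (rfl | rfl) | ⟨i, rfl⟩
    · rcases hb with (rfl | rfl | rfl) | ⟨j, rfl⟩
      · exact monomial_mem_of_le le_sup_left (by rw [← hx3m]; exact hx3T)
      · exact monomial_mem_of_le le_sup_right (by rw [← hxym]; exact hxyT)
      · exact monomial_mem_of_le le_sup_right (by rw [← hy2m]; exact hy2T)
      · exact monomial_mem_of_le le_sup_right (by rw [← hzm j]; exact hzT j)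
    · rcases hb with (rfl | rfl | rfl) | ⟨j, rfl⟩
      · exact monomial_mem_of_le (e11_le_sup r) (by rw [← hxym]; exact hxyT)
      · exact monomial_mem_of_le le_sup_right (by rw [← hxym]; exact hxyT)
      · exact monomial_mem_of_le le_sup_right (by rw [← hy2m]; exact hy2T)
      · exact monomial_mem_of_le le_sup_right (by rw [← hzm j]; exact hzT j)
    · exact monomial_mem_of_le le_sup_left (by rw [← hzm i]; exact hzT i)
  have FE3ge : Ideal.span ({x ^ 3, x * y, y ^ 2} ∪ Set.range z) ≤ I₃ ⊓ J₂ := by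
    rw [Ideal.span_le]
    rintro v hv
    simp only [Set.mem_union, Set.mem_insert_iff, Set.mem_singleton_iff, Set.mem_range] at hv
    rcases hv with (rfl | rfl | rfl) | ⟨i, rfl⟩
    · refine Submodule.mem_inf.2 ⟨hx3I₃, ?_⟩
      rw [show x ^ 3 = x * x ^ 2 by ring]
      exact Ideal.mul_mem_left _ _ hx2J₂
    · exact Submodule.mem_inf.2 ⟨Ideal.mul_mem_left _ _ hyI₃, hxyJ₂⟩
    · exact Submodule.mem_inf.2 ⟨Ideal.pow_mem_of_mem _ hyI₃ 2 two_pos, hy2J₂⟩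
    · exact Submodule.mem_inf.2 ⟨hzI₃ i, hzJ₂ i⟩
  have E3 : I₃ ⊓ J₂ = Ideal.span ({x ^ 3, x * y, y ^ 2} ∪ Set.range z) :=
    le_antisymm FE3le FE3ge
  -- last conjunct
  have hJ₂I₂ : J₂ ≤ I₂ := by
    rw [hJ₂, Ideal.span_le]
    rintro v hv
    simp only [Set.mem_union, Set.mem_insert_iff, Set.mem_singleton_iff, Set.mem_range] at hv
    rcases hv with (rfl | rfl | rfl) | ⟨i, rfl⟩
    · exact hx2I₂
    · exact Ideal.mul_mem_left _ _ hyI₂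
    · exact Ideal.pow_mem_of_mem _ hyI₂ 2 two_pos
    · exact hzI₂ i
  have hI₃I₂ : I₃ ≤ I₂ := by
    rw [hI₃, Ideal.span_le]
    rintro v hv
    simp only [Set.mem_union, Set.mem_insert_iff, Set.mem_singleton_iff, Set.mem_range] at hv
    rcases hv with (rfl | rfl) | ⟨i, rfl⟩
    · rw [show x ^ 3 = x * x ^ 2 by ring]
      exact Ideal.mul_mem_left _ _ hx2I₂
    · exact hyI₂
    · exact hzI₂ i
  have FE5 : J₂ + I₃ = I₂ := by
    rw [Ideal.add_eq_sup]
    refine le_antisymm (sup_le hJ₂I₂ hI₃I₂) ?_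
    rw [hI₂, Ideal.span_le]
    rintro v hv
    simp only [Set.mem_union, Set.mem_insert_iff, Set.mem_singleton_iff, Set.mem_range] at hv
    rcases hv with (rfl | rfl) | ⟨i, rfl⟩
    · exact Submodule.mem_sup_left hx2J₂
    · exact Submodule.mem_sup_right hyI₃
    · exact Submodule.mem_sup_left (hzJ₂ i)
  -- the non-membership facts
  have N1 : x * y ∉ I * J₂ := by
    intro hmem
    have h := ((Ideal.mul_mono hIW hJ₂W).trans (W_mul_le _ _)) hmem
    obtain ⟨m, hm, hle⟩ := h (e11 r)
      (by rw [hxym, coeff_monomial_same]; exact one_ne_zero)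
    obtain ⟨a, ha, b, hb, rfl⟩ := Set.mem_add.1 hm
    exact not_le_N1 r ha hb hle
  have N3 : y ^ 2 ∉ J₃ := by
    intro hmem
    obtain ⟨m, hm, hle⟩ := hJ₃W hmem (e02 r)
      (by rw [hy2m, coeff_monomial_same]; exact one_ne_zero)
    exact not_le_N3 r hm hle
  have N2 : y ^ 2 ∉ I ^ 2 ⊓ J₃ := fun h => N3 (Submodule.mem_inf.1 h).2
  -- the graded pieces
  have G1 : gradedPiece k (I ^ 2 ⊓ J₃) (I * J₂) =
      Submodule.span k {Ideal.Quotient.mk (I * J₂) (x * y)} :=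
    gradedPiece_eq _ _ _ (Submodule.mem_inf.2 ⟨hI2mm hxI hyI, hxyJ₃⟩) FE1
      (fun g hg => Ideal.mul_mem_mul (hsub g hg) hxyJ₂)
  have G2 : gradedPiece k (I * I₂) (I ^ 2 ⊓ J₃) =
      Submodule.span k {Ideal.Quotient.mk (I ^ 2 ⊓ J₃) (y ^ 2)} :=
    gradedPiece_eq _ _ _ (by rw [show y ^ 2 = y * y by ring]; exact Ideal.mul_mem_mul hyI hyI₂)
      FE2 (fun g hg => Submodule.mem_inf.2 ⟨hI2mm (hsub g hg) hy2I,
        hIy2J₃ (Ideal.mul_mem_mul (hsub g hg) (Ideal.subset_span rfl))⟩)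
  have G3 : gradedPiece k (I₃ ⊓ J₂) J₃ =
      Submodule.span k {Ideal.Quotient.mk J₃ (y ^ 2)} := by
    refine gradedPiece_eq _ _ _
      (Submodule.mem_inf.2 ⟨Ideal.pow_mem_of_mem _ hyI₃ 2 two_pos, hy2J₂⟩)
      (FE3le.trans (Ideal.span_le.2 ?_))
      (fun g hg => hIy2J₃ (Ideal.mul_mem_mul (hsub g hg) (Ideal.subset_span rfl)))
    rintro v hv
    simp only [Set.mem_union, Set.mem_insert_iff, Set.mem_singleton_iff, Set.mem_range] at hv
    rcases hv with (rfl | rfl | rfl) | ⟨i, rfl⟩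
    · exact Submodule.mem_sup_left hx3J₃
    · exact Submodule.mem_sup_left hxyJ₃
    · exact Submodule.mem_sup_right (Ideal.subset_span rfl)
    · exact Submodule.mem_sup_left (hzJ₃ i)
  refine ⟨F1, ⟨G1, ?_⟩, ⟨G2, ?_⟩, E3, ⟨G3, ?_⟩, FE5⟩
  · rw [G1]
    exact finrank_graded _ _ N1
  · rw [G2]
    exact finrank_graded _ _ N2
  · rw [G3]
    exact finrank_graded _ _ N3
end
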